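/- arXiv:1511.09435 — 6 statements merged into one kernel-verified Lean document; each statement's English description precedes it below -/
import Mathlib

section
/- Assume hypotheses (H). Then for every pair of vertices y, z of Γ at distance 2, the subgraph of Γ induced on the set of common neighbours of y and z is isomorphic to the 6-cycle C_6. -/
open SimpleGraph

/-- The `(n × m)`-grid: the Cartesian product of the complete graphs `K_n` and `K_m`. -/
def gridGraph (n m : ℕ) : SimpleGraph (Fin n × Fin m) where
  Adj a b := a ≠ b ∧ (a.1 = b.1 ∨ a.2 = b.2)
  symm := ⟨by intro a b h; exact ⟨h.1.symm, h.2.imp Eq.symm Eq.symm⟩⟩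
  loopless := ⟨by intro a h; exact h.1 rfl⟩

lemma gridGraph_adj {n m : ℕ} (a b : Fin n × Fin m) :
    (gridGraph n m).Adj a b ↔ a ≠ b ∧ (a.1 = b.1 ∨ a.2 = b.2) := Iff.rfl

lemma grid_nonadj {n m : ℕ} {a b : Fin n × Fin m} (hne : a ≠ b)
    (h : ¬(gridGraph n m).Adj a b) : a.1 ≠ b.1 ∧ a.2 ≠ b.2 :=
  ⟨fun he => h ⟨hne, Or.inl he⟩, fun he => h ⟨hne, Or.inr he⟩⟩

lemma grid_common_iff {n m : ℕ} {a b : Fin n × Fin m} (h1 : a.1 ≠ b.1) (h2 : a.2 ≠ b.2)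
    (c : Fin n × Fin m) :
    (gridGraph n m).Adj a c ∧ (gridGraph n m).Adj b c ↔ c = (a.1, b.2) ∨ c = (b.1, a.2) := by
  simp only [gridGraph_adj]
  constructor
  · rintro ⟨⟨hac, hc1 | hc2⟩, ⟨hbc, hd1 | hd2⟩⟩
    · exact absurd (hc1.trans hd1.symm) h1
    · exact Or.inl (Prod.ext hc1.symm hd2.symm)
    · exact Or.inr (Prod.ext hd1.symm hc2.symm)
    · exact absurd (hc2.trans hd2.symm) h2
  · rintro (rfl | rfl)
    · exact ⟨⟨fun h => h2 (Prod.ext_iff.mp h).2, Or.inl rfl⟩,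
        ⟨fun h => h1 (Prod.ext_iff.mp h).1.symm, Or.inr rfl⟩⟩
    · exact ⟨⟨fun h => h1 (Prod.ext_iff.mp h).1, Or.inr rfl⟩,
        ⟨fun h => h2 (Prod.ext_iff.mp h).2.symm, Or.inl rfl⟩⟩

lemma grid_corner_ne {n m : ℕ} {a b : Fin n × Fin m} (h1 : a.1 ≠ b.1) :
    ((a.1, b.2) : Fin n × Fin m) ≠ (b.1, a.2) :=
  fun h => h1 (Prod.ext_iff.mp h).1

lemma grid_corner_nonadj {n m : ℕ} {a b : Fin n × Fin m} (h1 : a.1 ≠ b.1) (h2 : a.2 ≠ b.2) :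
    ¬ (gridGraph n m).Adj (a.1, b.2) (b.1, a.2) := by
  rintro ⟨-, h | h⟩
  · exact h1 h
  · exact h2 h.symm

lemma three_le_ncard {V : Type} [Fintype V] {S : Set V} {a b c : V}
    (ha : a ∈ S) (hb : b ∈ S) (hc : c ∈ S) (hab : a ≠ b) (hac : a ≠ c) (hbc : b ≠ c) :
    3 ≤ S.ncard := by
  have hsub : ({a, b, c} : Set V) ⊆ S := by
    rintro x (rfl | rfl | rfl) <;> assumption
  have h3 : ({a, b, c} : Set V).ncard = 3 := by
    rw [Set.ncard_insert_of_notMem (by simp [hab, hac]),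
      Set.ncard_insert_of_notMem (by simp [hbc]), Set.ncard_singleton]
  calc 3 = ({a, b, c} : Set V).ncard := h3.symm
    _ ≤ S.ncard := Set.ncard_le_ncard hsub (Set.toFinite S)

lemma closed_contradiction {V : Type} [Fintype V] (Γ : SimpleGraph V) {S T : Set V}
    (hpair : ∀ w ∈ S, ∃ a b, a ∈ S ∧ b ∈ S ∧ a ≠ b ∧ ¬Γ.Adj a b ∧ Γ.Adj w a ∧ Γ.Adj w b ∧
      ∀ u ∈ S, Γ.Adj w u → u = a ∨ u = b)
    (hclosed : ∀ t ∈ T, ∀ x ∈ S, Γ.Adj t x → x ∈ T)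
    (hcard : (S \ T).ncard ≤ 2) (hne : (S \ T).Nonempty) : False := by
  obtain ⟨u, huS, huT⟩ := hne
  obtain ⟨a, b, haS, hbS, hab, -, hua, hub, -⟩ := hpair u huS
  have haT : a ∉ T := fun h => huT (hclosed a h u huS hua.symm)
  have hbT : b ∉ T := fun h => huT (hclosed b h u huS hub.symm)
  have h3 : 3 ≤ (S \ T).ncard :=
    three_le_ncard (⟨huS, huT⟩ : u ∈ S \ T) ⟨haS, haT⟩ ⟨hbS, hbT⟩ hua.ne hub.ne hab
  omega

lemma hexagon_of_pairs {V : Type} [Fintype V] (Γ : SimpleGraph V) (S : Set V)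
    (hS : S.ncard = 6)
    (hpair : ∀ w ∈ S, ∃ a b, a ∈ S ∧ b ∈ S ∧ a ≠ b ∧ ¬Γ.Adj a b ∧ Γ.Adj w a ∧ Γ.Adj w b ∧
      ∀ u ∈ S, Γ.Adj w u → u = a ∨ u = b) :
    Nonempty (Γ.induce S ≃g cycleGraph 6) := by
  have next : ∀ w ∈ S, ∀ x ∈ S, Γ.Adj w x → ∃ y, y ∈ S ∧ Γ.Adj w y ∧ y ≠ x ∧ ¬Γ.Adj x y ∧
      ∀ u ∈ S, Γ.Adj w u → u = x ∨ u = y := by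
    intro w hw x hx hwx
    obtain ⟨a, b, haS, hbS, hab, hnadj, hwa, hwb, huniq⟩ := hpair w hw
    rcases huniq x hx hwx with rfl | rfl
    · exact ⟨b, hbS, hwb, hab.symm, hnadj, huniq⟩
    · exact ⟨a, haS, hwa, hab, fun h => hnadj h.symm,
        fun u hu hwu => (huniq u hu hwu).symm⟩
  have pairdet : ∀ w ∈ S, ∀ x ∈ S, ∀ y ∈ S, Γ.Adj w x → Γ.Adj w y → x ≠ y →
      ∀ u ∈ S, Γ.Adj w u → u = x ∨ u = y := by
    intro w hw x hx y hy hwx hwy hxy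
    obtain ⟨t, htS, -, -, -, huniq⟩ := next w hw x hx hwx
    rcases huniq y hy hwy with rfl | rfl
    · exact absurd rfl hxy
    · exact huniq
  have hSne : S.Nonempty := Set.nonempty_of_ncard_ne_zero (by omega)
  obtain ⟨w0, hw0⟩ := hSne
  obtain ⟨w1, w5, h1S, h5S, hne15, hn15, h01, h05, hu0⟩ := hpair w0 hw0
  obtain ⟨w2, h2S, h12, hne20, hn02, hu1⟩ := next w1 h1S w0 hw0 h01.symm
  have hne01 : w0 ≠ w1 := h01.ne
  have hne05 : w0 ≠ w5 := h05.ne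
  have hne12 : w1 ≠ w2 := h12.ne
  have hne02 : w0 ≠ w2 := hne20.symm
  have hne25 : w2 ≠ w5 := fun h => hn02 (h ▸ h05)
  obtain ⟨w3, h3S, h23, hne31, hn13, hu2⟩ := next w2 h2S w1 h1S h12.symm
  have hne23 : w2 ≠ w3 := h23.ne
  have hne13 : w1 ≠ w3 := hne31.symm
  have hne03 : w0 ≠ w3 := by
    intro h; rw [← h] at h23; exact hn02 h23.symm
  have hne35 : w3 ≠ w5 := by
    intro heq
    have hTsub : ({w0, w1, w2, w3} : Set V) ⊆ S := by
      rintro x (rfl | rfl | rfl | rfl) <;> assumption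
    have hT4 : ({w0, w1, w2, w3} : Set V).ncard = 4 := by
      rw [Set.ncard_insert_of_notMem (by simp [hne01, hne02, hne03]),
        Set.ncard_insert_of_notMem (by simp [hne12, hne13]),
        Set.ncard_insert_of_notMem (by simp [hne23]), Set.ncard_singleton]
    have hdiff : (S \ ({w0, w1, w2, w3} : Set V)).ncard = 6 - 4 := by
      rw [Set.ncard_diff hTsub, hS, hT4]
    refine closed_contradiction Γ (S := S) (T := {w0, w1, w2, w3}) hpair ?_
      (by omega) (Set.nonempty_of_ncard_ne_zero (by omega))
    rintro t (rfl | rfl | rfl | rfl) x hx hadj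
    · rcases hu0 x hx hadj with rfl | rfl
      · exact Or.inr (Or.inl rfl)
      · rw [← heq]; exact Or.inr (Or.inr (Or.inr rfl))
    · rcases hu1 x hx hadj with rfl | rfl
      · exact Or.inl rfl
      · exact Or.inr (Or.inr (Or.inl rfl))
    · rcases hu2 x hx hadj with rfl | rfl
      · exact Or.inr (Or.inl rfl)
      · exact Or.inr (Or.inr (Or.inr rfl))
    · have h05' : Γ.Adj t w0 := by rw [heq]; exact h05.symm
      rcases pairdet t h3S w0 hw0 w2 h2S h05' h23.symm hne02 x hx hadj with rfl | rfl
      · exact Or.inl rfl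
      · exact Or.inr (Or.inr (Or.inl rfl))
  obtain ⟨w4, h4S, h34, hne42, hn24, hu3⟩ := next w3 h3S w2 h2S h23.symm
  have hne34 : w3 ≠ w4 := h34.ne
  have hne24 : w2 ≠ w4 := hne42.symm
  have hne14 : w1 ≠ w4 := by
    intro h; rw [← h] at h34; exact hn13 h34.symm
  have hne04 : w0 ≠ w4 := by
    intro h; rw [← h] at h34
    rcases hu0 w3 h3S h34.symm with rfl | rfl
    · exact hne13 rfl
    · exact hne35 rfl
  have hne45 : w4 ≠ w5 := by
    intro heq
    have hTsub : ({w0, w1, w2, w3, w4} : Set V) ⊆ S := by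
      rintro x (rfl | rfl | rfl | rfl | rfl) <;> assumption
    have hT5 : ({w0, w1, w2, w3, w4} : Set V).ncard = 5 := by
      rw [Set.ncard_insert_of_notMem (by simp [hne01, hne02, hne03, hne04]),
        Set.ncard_insert_of_notMem (by simp [hne12, hne13, hne14]),
        Set.ncard_insert_of_notMem (by simp [hne23, hne24]),
        Set.ncard_insert_of_notMem (by simp [hne34]), Set.ncard_singleton]
    have hdiff : (S \ ({w0, w1, w2, w3, w4} : Set V)).ncard = 6 - 5 := by
      rw [Set.ncard_diff hTsub, hS, hT5]
    refine closed_contradiction Γ (S := S) (T := {w0, w1, w2, w3, w4}) hpair ?_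
      (by omega) (Set.nonempty_of_ncard_ne_zero (by omega))
    rintro t (rfl | rfl | rfl | rfl | rfl) x hx hadj
    · rcases hu0 x hx hadj with rfl | rfl
      · exact Or.inr (Or.inl rfl)
      · rw [← heq]; exact Or.inr (Or.inr (Or.inr (Or.inr rfl)))
    · rcases hu1 x hx hadj with rfl | rfl
      · exact Or.inl rfl
      · exact Or.inr (Or.inr (Or.inl rfl))
    · rcases hu2 x hx hadj with rfl | rfl
      · exact Or.inr (Or.inl rfl)
      · exact Or.inr (Or.inr (Or.inr (Or.inl rfl)))
    · rcases hu3 x hx hadj with rfl | rfl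
      · exact Or.inr (Or.inr (Or.inl rfl))
      · exact Or.inr (Or.inr (Or.inr (Or.inr rfl)))
    · have h05' : Γ.Adj t w0 := by rw [heq]; exact h05.symm
      rcases pairdet t h4S w0 hw0 w3 h3S h05' h34.symm hne03 x hx hadj with rfl | rfl
      · exact Or.inl rfl
      · exact Or.inr (Or.inr (Or.inr (Or.inl rfl)))
  -- S is exactly {w0, ..., w5}
  have hT6 : ({w0, w1, w2, w3, w4, w5} : Set V).ncard = 6 := by
    rw [Set.ncard_insert_of_notMem (by simp [hne01, hne02, hne03, hne04, hne05]),
      Set.ncard_insert_of_notMem (by simp [hne12, hne13, hne14, hne15]),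
      Set.ncard_insert_of_notMem (by simp [hne23, hne24, hne25]),
      Set.ncard_insert_of_notMem (by simp [hne34, hne35]),
      Set.ncard_insert_of_notMem (by simp [hne45]), Set.ncard_singleton]
  have hSeq : ({w0, w1, w2, w3, w4, w5} : Set V) = S :=
    Set.eq_of_subset_of_ncard_le
      (by rintro x (rfl | rfl | rfl | rfl | rfl | rfl) <;> assumption)
      (by rw [hS, hT6])
  -- pin down the pair of w4
  obtain ⟨t, htS, h4t, hnet3, hn3t, hu4'⟩ := next w4 h4S w3 h3S h34.symm
  have ht5 : t = w5 := by
    have htmem : t ∈ ({w0, w1, w2, w3, w4, w5} : Set V) := hSeq ▸ htS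
    rcases htmem with rfl | rfl | rfl | rfl | rfl | rfl
    · rcases hu0 w4 h4S h4t.symm with h | h
      · exact absurd h.symm hne14
      · exact absurd h hne45
    · rcases hu1 w4 h4S h4t.symm with h | h
      · exact absurd h.symm hne04
      · exact absurd h.symm hne24
    · exact absurd h4t.symm hn24
    · exact absurd rfl hnet3
    · exact absurd h4t Γ.irrefl
    · rfl
  rw [ht5] at h4t hn3t hu4'
  have h45 : Γ.Adj w4 w5 := h4t
  have hn35 : ¬Γ.Adj w3 w5 := hn3t
  have hu5 : ∀ u ∈ S, Γ.Adj w5 u → u = w4 ∨ u = w0 :=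
    pairdet w5 h5S w4 h4S w0 hw0 h45.symm h05.symm hne04.symm
  -- full non-adjacency table
  have hn03 : ¬Γ.Adj w0 w3 := fun h => by
    rcases hu0 w3 h3S h with h' | h'
    · exact hne13 h'.symm
    · exact hne35 h'
  have hn04 : ¬Γ.Adj w0 w4 := fun h => by
    rcases hu0 w4 h4S h with h' | h'
    · exact hne14 h'.symm
    · exact hne45 h'
  have hn14 : ¬Γ.Adj w1 w4 := fun h => by
    rcases hu1 w4 h4S h with h' | h'
    · exact hne04 h'.symm
    · exact hne24 h'.symm
  have hn25 : ¬Γ.Adj w2 w5 := fun h => by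
    rcases hu2 w5 h5S h with h' | h'
    · exact hne15 h'.symm
    · exact hne35 h'.symm
  -- build the isomorphism
  set f : Fin 6 → V := ![w0, w1, w2, w3, w4, w5] with hf
  have hmem : ∀ i : Fin 6, f i ∈ S := by
    intro i
    fin_cases i
    · exact hw0
    · exact h1S
    · exact h2S
    · exact h3S
    · exact h4S
    · exact h5S
  set g : Fin 6 → ↥S := fun i => ⟨f i, hmem i⟩ with hg
  have hginj : Function.Injective g := by
    intro i j hij
    have hfij : f i = f j := congrArg Subtype.val hij
    fin_cases i <;> fin_cases j <;>
      first
        | rfl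
        | exact absurd hfij hne01 | exact absurd hfij.symm hne01
        | exact absurd hfij hne02 | exact absurd hfij.symm hne02
        | exact absurd hfij hne03 | exact absurd hfij.symm hne03
        | exact absurd hfij hne04 | exact absurd hfij.symm hne04
        | exact absurd hfij hne05 | exact absurd hfij.symm hne05
        | exact absurd hfij hne12 | exact absurd hfij.symm hne12
        | exact absurd hfij hne13 | exact absurd hfij.symm hne13
        | exact absurd hfij hne14 | exact absurd hfij.symm hne14
        | exact absurd hfij hne15 | exact absurd hfij.symm hne15
        | exact absurd hfij hne23 | exact absurd hfij.symm hne23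
        | exact absurd hfij hne24 | exact absurd hfij.symm hne24
        | exact absurd hfij hne25 | exact absurd hfij.symm hne25
        | exact absurd hfij hne34 | exact absurd hfij.symm hne34
        | exact absurd hfij hne35 | exact absurd hfij.symm hne35
        | exact absurd hfij hne45 | exact absurd hfij.symm hne45
  have hgsurj : Function.Surjective g := by
    rintro ⟨v, hv⟩
    have hvmem : v ∈ ({w0, w1, w2, w3, w4, w5} : Set V) := hSeq ▸ hv
    rcases hvmem with rfl | rfl | rfl | rfl | rfl | rfl
    · exact ⟨0, rfl⟩
    · exact ⟨1, rfl⟩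
    · exact ⟨2, rfl⟩
    · exact ⟨3, rfl⟩
    · exact ⟨4, rfl⟩
    · exact ⟨5, rfl⟩
  have hAdj : ∀ i j : Fin 6, Γ.Adj (f i) (f j) ↔ (cycleGraph 6).Adj i j := by
    intro i j
    fin_cases i <;> fin_cases j
    · exact iff_of_false (Γ.irrefl (v := w0)) (by decide)
    · exact iff_of_true h01 (by decide)
    · exact iff_of_false hn02 (by decide)
    · exact iff_of_false hn03 (by decide)
    · exact iff_of_false hn04 (by decide)
    · exact iff_of_true h05 (by decide)
    · exact iff_of_true h01.symm (by decide)
    · exact iff_of_false (Γ.irrefl (v := w1)) (by decide)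
    · exact iff_of_true h12 (by decide)
    · exact iff_of_false hn13 (by decide)
    · exact iff_of_false hn14 (by decide)
    · exact iff_of_false hn15 (by decide)
    · exact iff_of_false (fun h => hn02 h.symm) (by decide)
    · exact iff_of_true h12.symm (by decide)
    · exact iff_of_false (Γ.irrefl (v := w2)) (by decide)
    · exact iff_of_true h23 (by decide)
    · exact iff_of_false hn24 (by decide)
    · exact iff_of_false hn25 (by decide)
    · exact iff_of_false (fun h => hn03 h.symm) (by decide)
    · exact iff_of_false (fun h => hn13 h.symm) (by decide)
    · exact iff_of_true h23.symm (by decide)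
    · exact iff_of_false (Γ.irrefl (v := w3)) (by decide)
    · exact iff_of_true h34 (by decide)
    · exact iff_of_false hn35 (by decide)
    · exact iff_of_false (fun h => hn04 h.symm) (by decide)
    · exact iff_of_false (fun h => hn14 h.symm) (by decide)
    · exact iff_of_false (fun h => hn24 h.symm) (by decide)
    · exact iff_of_true h34.symm (by decide)
    · exact iff_of_false (Γ.irrefl (v := w4)) (by decide)
    · exact iff_of_true h45 (by decide)
    · exact iff_of_true h05.symm (by decide)
    · exact iff_of_false (fun h => hn15 h.symm) (by decide)
    · exact iff_of_false (fun h => hn25 h.symm) (by decide)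
    · exact iff_of_false (fun h => hn35 h.symm) (by decide)
    · exact iff_of_true h45.symm (by decide)
    · exact iff_of_false (Γ.irrefl (v := w5)) (by decide)
  refine ⟨(RelIso.mk (Equiv.ofBijective g ⟨hginj, hgsurj⟩) ?_).symm⟩
  intro i j
  exact hAdj i j

/-- Under hypotheses (H), the subgraph induced on the set of common
neighbours of any two vertices at distance 2 is a hexagon (the 6-cycle `C₆`). -/
theorem mu_graphs_are_hexagons (n m : ℕ) (hm : 3 ≤ m) (hmn : m ≤ n)
    (V : Type) [Fintype V] (Γ : SimpleGraph V)
    (hconn : Γ.Connected)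
    (hdiam : ∃ x y : V, 2 ≤ Γ.dist x y)
    (hloc : ∀ x : V, Nonempty ((Γ.induce (Γ.neighborSet x)) ≃g gridGraph n m))
    (hb0 : ∀ x : V, {y : V | Γ.Adj x y}.ncard = n * m)
    (hb1 : ∀ x y : V, Γ.Adj x y →
      {z : V | Γ.Adj y z ∧ Γ.dist x z = 2}.ncard = (n - 1) * (m - 1))
    (hb2 : ∀ x y : V, Γ.dist x y = 2 →
      {z : V | Γ.Adj y z ∧ Γ.dist x z = 3}.ncard = (n - 3) * (m - 3))
    (hc2 : ∀ x y : V, Γ.dist x y = 2 →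
      {z : V | Γ.Adj x z ∧ Γ.Adj y z}.ncard = 6)
    :
    ∀ y z : V, Γ.dist y z = 2 →
      Nonempty ((Γ.induce {w : V | Γ.Adj y w ∧ Γ.Adj z w}) ≃g cycleGraph 6) := by
  intro y z hyz
  have hyzne : y ≠ z := by
    rintro rfl
    rw [Γ.dist_self] at hyz
    exact two_ne_zero hyz.symm
  have hynz : ¬ Γ.Adj y z := by
    intro h
    have h1 : Γ.dist y z ≤ 1 := by
      have := Γ.dist_le h.toWalk
      simpa using this
    omega
  apply hexagon_of_pairs
  · exact hc2 y z hyz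
  · rintro w ⟨hyw, hzw⟩
    obtain ⟨φ⟩ := hloc w
    set N := Γ.neighborSet w with hN
    have hyN : y ∈ N := hyw.symm
    have hzN : z ∈ N := hzw.symm
    set y' : ↥N := ⟨y, hyN⟩ with hy'
    set z' : ↥N := ⟨z, hzN⟩ with hz'
    have hy'z'ne : φ y' ≠ φ z' := by
      intro h
      exact hyzne (congrArg Subtype.val (φ.toEquiv.injective h))
    have hy'z'nadj : ¬ (gridGraph n m).Adj (φ y') (φ z') := by
      intro h
      exact hynz (φ.map_rel_iff.mp h)
    obtain ⟨hA1, hA2⟩ := grid_nonadj hy'z'ne hy'z'nadj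
    set c1 : Fin n × Fin m := ((φ y').1, (φ z').2) with hc1
    set c2 : Fin n × Fin m := ((φ z').1, (φ y').2) with hc2'
    have key : ∀ u' : ↥N, (Γ.Adj y u'.1 ∧ Γ.Adj z u'.1) ↔ (φ u' = c1 ∨ φ u' = c2) := by
      intro u'
      rw [← grid_common_iff hA1 hA2 (φ u')]
      have e1 : (gridGraph n m).Adj (φ y') (φ u') ↔ Γ.Adj y u'.1 := φ.map_rel_iff
      have e2 : (gridGraph n m).Adj (φ z') (φ u') ↔ Γ.Adj z u'.1 := φ.map_rel_iff
      rw [e1, e2]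
    set a' : ↥N := φ.symm c1 with ha'
    set b' : ↥N := φ.symm c2 with hb'
    have hφa : φ a' = c1 := φ.apply_symm_apply c1
    have hφb : φ b' = c2 := φ.apply_symm_apply c2
    have haS : Γ.Adj y a'.1 ∧ Γ.Adj z a'.1 := (key a').mpr (Or.inl hφa)
    have hbS : Γ.Adj y b'.1 ∧ Γ.Adj z b'.1 := (key b').mpr (Or.inr hφb)
    refine ⟨a'.1, b'.1, haS, hbS, ?_, ?_, a'.2, b'.2, ?_⟩
    · intro h
      have : a' = b' := Subtype.ext h
      have : c1 = c2 := by rw [← hφa, ← hφb, this]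
      exact grid_corner_ne hA1 this
    · intro h
      have hadj : (Γ.induce N).Adj a' b' := h
      have hg : (gridGraph n m).Adj (φ a') (φ b') := φ.map_rel_iff.mpr hadj
      rw [hφa, hφb] at hg
      exact grid_corner_nonadj hA1 hA2 hg
    · rintro u ⟨huy, huz⟩ hwu
      have huN : u ∈ N := hwu
      have hk := (key ⟨u, huN⟩).mp ⟨huy, huz⟩
      rcases hk with h | h
      · left
        have : (⟨u, huN⟩ : ↥N) = a' := φ.toEquiv.injective (h.trans hφa.symm)
        exact congrArg Subtype.val this
      · right
        have : (⟨u, huN⟩ : ↥N) = b' := φ.toEquiv.injective (h.trans hφb.symm)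
        exact congrArg Subtype.val this
end

section
/- Assume hypotheses (H). Let x and z be vertices of Γ at distance 2 and let w be a neighbour of x. Then d(z,w) ≤ 2 if and only if w is a common neighbour of x and z, or w is adjacent to some common neighbour of x and z. -/
open SimpleGraph

/-- In a grid, two common neighbours of a nonadjacent pair are themselves nonadjacent. -/
lemma gridGraph_common_nonadj {n m : ℕ} {X Z U W : Fin n × Fin m}
    (hne : ¬ (gridGraph n m).Adj X Z) (hXZ : X ≠ Z)
    (hUX : (gridGraph n m).Adj U X) (hUZ : (gridGraph n m).Adj U Z)
    (hWX : (gridGraph n m).Adj W X) (hWZ : (gridGraph n m).Adj W Z)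
    (hUW : U ≠ W) : ¬ (gridGraph n m).Adj U W := by
  have h1 : X.1 ≠ Z.1 ∧ X.2 ≠ Z.2 := by
    by_contra h
    push_neg at h
    rcases eq_or_ne X.1 Z.1 with h'|h'
    · exact hne ⟨hXZ, Or.inl h'⟩
    · exact hne ⟨hXZ, Or.inr (h h')⟩
  have hcase : ∀ {P : Fin n × Fin m}, (gridGraph n m).Adj P X → (gridGraph n m).Adj P Z →
      P = (X.1, Z.2) ∨ P = (Z.1, X.2) := by
    intro P hPX hPZ
    rcases hPX.2 with h|h <;> rcases hPZ.2 with g|g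
    · exact absurd (h ▸ g) h1.1
    · exact Or.inl (Prod.ext h g)
    · exact Or.inr (Prod.ext g h)
    · exact absurd (h ▸ g) h1.2
  intro hadj
  rcases hcase hUX hUZ with rfl|rfl <;> rcases hcase hWX hWZ with rfl|rfl
  · exact hUW rfl
  · rcases hadj.2 with g|g
    · exact h1.1 g
    · exact h1.2 g.symm
  · rcases hadj.2 with g|g
    · exact h1.1 g.symm
    · exact h1.2 g
  · exact hUW rfl

/-- Under hypotheses (H): for vertices `x, z` at distance 2 and a
neighbour `w` of `x`, one has `d(z,w) ≤ 2` iff `w` is a common neighbour of `x` and `z`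
or `w` is adjacent to some common neighbour of `x` and `z`. -/
theorem dist_le_two_iff_near_mu_graph (n m : ℕ) (hm : 3 ≤ m) (hmn : m ≤ n)
    (V : Type) [Fintype V] (Γ : SimpleGraph V)
    (hconn : Γ.Connected)
    (hdiam : ∃ x y : V, 2 ≤ Γ.dist x y)
    (hloc : ∀ x : V, Nonempty ((Γ.induce (Γ.neighborSet x)) ≃g gridGraph n m))
    (hb0 : ∀ x : V, {y : V | Γ.Adj x y}.ncard = n * m)
    (hb1 : ∀ x y : V, Γ.Adj x y →
      {z : V | Γ.Adj y z ∧ Γ.dist x z = 2}.ncard = (n - 1) * (m - 1))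
    (hb2 : ∀ x y : V, Γ.dist x y = 2 →
      {z : V | Γ.Adj y z ∧ Γ.dist x z = 3}.ncard = (n - 3) * (m - 3))
    (hc2 : ∀ x y : V, Γ.dist x y = 2 →
      {z : V | Γ.Adj x z ∧ Γ.Adj y z}.ncard = 6)
    (x z w : V) (hxz : Γ.dist x z = 2) (hw : Γ.Adj x w) :
    Γ.dist z w ≤ 2 ↔
      ((Γ.Adj x w ∧ Γ.Adj z w) ∨ ∃ u : V, Γ.Adj x u ∧ Γ.Adj z u ∧ Γ.Adj w u) := by
  classical
  have hzx : Γ.dist z x = 2 := by rw [SimpleGraph.dist_comm]; exact hxz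
  have hnadjxz : ¬ Γ.Adj x z := fun h => by
    have h1 := SimpleGraph.dist_eq_one_iff_adj.mpr h; omega
  have hxnez : x ≠ z := by
    intro h; rw [h, SimpleGraph.dist_self] at hxz; omega
  -- Key local fact: two distinct common neighbours of b, x, z (with b a common
  -- neighbour of x and z) are nonadjacent.
  have key : ∀ b u v : V, Γ.Adj x b → Γ.Adj z b →
      Γ.Adj b u → Γ.Adj x u → Γ.Adj z u →
      Γ.Adj b v → Γ.Adj x v → Γ.Adj z v → u ≠ v → ¬ Γ.Adj u v := by
    intro b u v hxb hzb hbu hxu hzu hbv hxv hzv huv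
    obtain ⟨φ⟩ := hloc b
    have hmemx : x ∈ Γ.neighborSet b := hxb.symm
    have hmemz : z ∈ Γ.neighborSet b := hzb.symm
    have hmemu : u ∈ Γ.neighborSet b := hbu
    have hmemv : v ∈ Γ.neighborSet b := hbv
    set X := φ ⟨x, hmemx⟩ with hX
    set Z := φ ⟨z, hmemz⟩ with hZ
    set U := φ ⟨u, hmemu⟩ with hU
    set W := φ ⟨v, hmemv⟩ with hW
    have hadj_iff : ∀ (p q : Γ.neighborSet b),
        (gridGraph n m).Adj (φ p) (φ q) ↔ Γ.Adj p q := by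
      intro p q
      rw [φ.map_adj_iff]
      simp [comap_adj]
    have hne : ¬ (gridGraph n m).Adj X Z := by
      intro h
      exact hnadjxz ((hadj_iff _ _).mp h)
    have hXZ : X ≠ Z := by
      intro h
      exact hxnez (Subtype.mk_eq_mk.mp (φ.toEquiv.injective h))
    have hUW : U ≠ W := by
      intro h
      exact huv (Subtype.mk_eq_mk.mp (φ.toEquiv.injective h))
    intro h
    exact gridGraph_common_nonadj hne hXZ
      ((hadj_iff _ _).mpr hxu.symm) ((hadj_iff _ _).mpr hzu.symm)
      ((hadj_iff _ _).mpr hxv.symm) ((hadj_iff _ _).mpr hzv.symm)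
      hUW ((hadj_iff _ _).mpr h)
  -- set up the grid coordinates on the neighbourhood of x
  obtain ⟨φ⟩ := hloc x
  set e : Fin n × Fin m → V := fun p => ((φ.symm p : Γ.neighborSet x) : V) with he
  have he_adjx : ∀ p, Γ.Adj x (e p) := fun p => (φ.symm p).2
  have he_inj : Function.Injective e := by
    intro p q h
    exact φ.symm.toEquiv.injective (Subtype.ext h)
  have he_surj : ∀ v : V, Γ.Adj x v → ∃ p, e p = v := by
    intro v hv
    refine ⟨φ ⟨v, hv⟩, ?_⟩
    show ((φ.symm (φ ⟨v, hv⟩) : Γ.neighborSet x) : V) = v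
    rw [RelIso.symm_apply_apply]
  have he_adj : ∀ p q, Γ.Adj (e p) (e q) ↔ (gridGraph n m).Adj p q := by
    intro p q
    rw [← φ.symm.map_adj_iff]
    simp [comap_adj]
    rfl
  -- sets of neighbours of x, transported to the grid
  have hcard : ∀ P : V → Prop, {v : V | Γ.Adj x v ∧ P v}.ncard
      = (Finset.univ.filter fun p => P (e p)).card := by
    intro P
    have himg : {v : V | Γ.Adj x v ∧ P v}
        = e '' ↑(Finset.univ.filter fun p => P (e p)) := by
      ext v
      constructor
      · rintro ⟨hxv, hP⟩
        obtain ⟨p, rfl⟩ := he_surj v hxv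
        exact ⟨p, by simpa using hP, rfl⟩
      · rintro ⟨p, hp, rfl⟩
        simp only [Finset.coe_filter, Finset.mem_univ, true_and, Set.mem_setOf_eq] at hp
        exact ⟨he_adjx p, hp⟩
    rw [himg, Set.ncard_image_of_injective _ he_inj, Set.ncard_coe_finset]
  -- the grid positions of the common neighbours of x and z
  set A' : Finset (Fin n × Fin m) := Finset.univ.filter (fun p => Γ.Adj z (e p)) with hA'
  have hA'card : A'.card = 6 := by
    rw [← hcard (fun v => Γ.Adj z v)]
    exact hc2 x z hxz
  -- every grid line contains at most 2 points of A'
  have hline : ∀ (f : Fin n × Fin m → Fin n ⊕ Fin m) (c : Fin n ⊕ Fin m),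
      (∀ p q : Fin n × Fin m, p ≠ q → f p = f q → (gridGraph n m).Adj p q) →
      (A'.filter fun p => f p = c).card ≤ 2 := by
    intro f c hf
    by_contra hgt
    push_neg at hgt
    obtain ⟨p, q, s, hp, hq, hs, hpq, hps, hqs⟩ := Finset.two_lt_card_iff.mp hgt
    simp only [Finset.mem_filter, Finset.mem_univ, true_and, hA'] at hp hq hs
    have hadjpq : Γ.Adj (e p) (e q) := (he_adj p q).mpr (hf p q hpq (hp.2.trans hq.2.symm))
    have hadjps : Γ.Adj (e p) (e s) := (he_adj p s).mpr (hf p s hps (hp.2.trans hs.2.symm))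
    have hadjqs : Γ.Adj (e q) (e s) := (he_adj q s).mpr (hf q s hqs (hq.2.trans hs.2.symm))
    exact key (e p) (e q) (e s) (he_adjx p) hp.1 hadjpq (he_adjx q) hq.1
      hadjps (he_adjx s) hs.1 (fun h => hqs (he_inj h)) hadjqs
  have hrow2 : ∀ r : Fin n, (A'.filter fun p => p.1 = r).card ≤ 2 := by
    intro r
    have := hline (fun p => Sum.inl p.1) (Sum.inl r)
      (fun p q hpq hf => ⟨hpq, Or.inl (by injection hf)⟩)
    simpa using this
  have hcol2 : ∀ c : Fin m, (A'.filter fun p => p.2 = c).card ≤ 2 := by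
    intro c
    have := hline (fun p => Sum.inr p.2) (Sum.inr c)
      (fun p q hpq hf => ⟨hpq, Or.inr (by injection hf)⟩)
    simpa using this
  -- hence A' occupies at least 3 rows and at least 3 columns
  set R : Finset (Fin n) := A'.image Prod.fst with hR
  set S : Finset (Fin m) := A'.image Prod.snd with hS
  have hR3 : 3 ≤ R.card := by
    have h1 : A'.card = ∑ r ∈ R, (A'.filter fun p => p.1 = r).card :=
      Finset.card_eq_sum_card_fiberwise (fun p hp => Finset.mem_image_of_mem Prod.fst hp)
    have h2 : ∑ r ∈ R, (A'.filter fun p => p.1 = r).card ≤ R.card * 2 := by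
      have := Finset.sum_le_card_nsmul R (fun r => (A'.filter fun p => p.1 = r).card) 2
        (fun r _ => hrow2 r)
      simpa [smul_eq_mul] using this
    omega
  have hS3 : 3 ≤ S.card := by
    have h1 : A'.card = ∑ c ∈ S, (A'.filter fun p => p.2 = c).card :=
      Finset.card_eq_sum_card_fiberwise (fun p hp => Finset.mem_image_of_mem Prod.snd hp)
    have h2 : ∑ c ∈ S, (A'.filter fun p => p.2 = c).card ≤ S.card * 2 := by
      have := Finset.sum_le_card_nsmul S (fun c => (A'.filter fun p => p.2 = c).card) 2
        (fun c _ => hcol2 c)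
      simpa [smul_eq_mul] using this
    omega
  -- the set of neighbours of x with no neighbour among the common neighbours of x,z
  set SS : Set V := {v : V | Γ.Adj x v ∧ (¬ Γ.Adj z v ∧
      ∀ a : V, Γ.Adj x a → Γ.Adj z a → ¬ Γ.Adj v a)} with hSS
  set D : Set V := {v : V | Γ.Adj x v ∧ Γ.dist z v = 3} with hD
  have hDcard : D.ncard = (n - 3) * (m - 3) := hb2 z x hzx
  have hDS : D ⊆ SS := by
    rintro v ⟨hxv, hdv⟩
    refine ⟨hxv, fun h => ?_, fun a hxa hza hva => ?_⟩
    · have h1 := SimpleGraph.dist_eq_one_iff_adj.mpr h; omega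
    · have h1 : Γ.dist z v ≤ Γ.dist z a + Γ.dist a v := hconn.dist_triangle
      have h2 := SimpleGraph.dist_eq_one_iff_adj.mpr hza
      have h3 := SimpleGraph.dist_eq_one_iff_adj.mpr (hva.symm : Γ.Adj a v)
      omega
  have hSScard : SS.ncard ≤ (n - 3) * (m - 3) := by
    rw [hSS, hcard]
    refine le_trans (Finset.card_le_card (t := Rᶜ ×ˢ Sᶜ) (fun p hp => ?_)) ?_
    · simp only [Finset.mem_filter, Finset.mem_univ, true_and] at hp
      have hnot : ∀ q ∈ A', p.1 ≠ q.1 ∧ p.2 ≠ q.2 := by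
        intro q hq
        simp only [hA', Finset.mem_filter, Finset.mem_univ, true_and] at hq
        have hpq : p ≠ q := by
          rintro rfl; exact hp.1 hq
        constructor
        · intro h
          exact hp.2 (e q) (he_adjx q) hq ((he_adj p q).mpr ⟨hpq, Or.inl h⟩)
        · intro h
          exact hp.2 (e q) (he_adjx q) hq ((he_adj p q).mpr ⟨hpq, Or.inr h⟩)
      rw [Finset.mem_product, Finset.mem_compl, Finset.mem_compl]
      constructor
      · intro h
        obtain ⟨q, hq, hq1⟩ := Finset.mem_image.mp h
        exact (hnot q hq).1 hq1.symm
      · intro h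
        obtain ⟨q, hq, hq1⟩ := Finset.mem_image.mp h
        exact (hnot q hq).2 hq1.symm
    · rw [Finset.card_product]
      have h1 : Rᶜ.card = n - R.card := by
        rw [Finset.card_compl, Fintype.card_fin]
      have h2 : Sᶜ.card = m - S.card := by
        rw [Finset.card_compl, Fintype.card_fin]
      rw [h1, h2]
      exact Nat.mul_le_mul (by omega) (by omega)
  have hDSS : D = SS :=
    Set.eq_of_subset_of_ncard_le hDS (by rw [hDcard]; exact hSScard) (Set.toFinite _)
  -- main equivalence
  constructor
  · intro hd2
    rcases (show Γ.dist z w = 0 ∨ Γ.dist z w = 1 ∨ Γ.dist z w = 2 by omega) with h|h|h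
    · exfalso
      have hzw : z = w := hconn.dist_eq_zero_iff.mp h
      rw [← hzw] at hw
      have h1 := SimpleGraph.dist_eq_one_iff_adj.mpr hw
      omega
    · exact Or.inl ⟨hw, SimpleGraph.dist_eq_one_iff_adj.mp h⟩
    · have hwD : w ∉ D := by
        rintro ⟨-, h3⟩; omega
      rw [hDSS] at hwD
      have hnzw : ¬ Γ.Adj z w := fun hzw => by
        have h1 := SimpleGraph.dist_eq_one_iff_adj.mpr hzw; omega
      simp only [hSS, Set.mem_setOf_eq, not_and, not_forall] at hwD
      obtain ⟨a, hxa, hza, hwa⟩ := hwD hw hnzw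
      exact Or.inr ⟨a, hxa, hza, not_not.mp hwa⟩
  · rintro (⟨-, hzw⟩ | ⟨u, hxu, hzu, hwu⟩)
    · have h1 := SimpleGraph.dist_eq_one_iff_adj.mpr hzw; omega
    · have h1 : Γ.dist z w ≤ Γ.dist z u + Γ.dist u w := hconn.dist_triangle
      have h2 := SimpleGraph.dist_eq_one_iff_adj.mpr hzu
      have h3 := SimpleGraph.dist_eq_one_iff_adj.mpr hwu.symm
      omega
end

section
/- Let F be a finite field and let e ≥ d ≥ 2 be integers. Let Γ be the bilinear forms graph on e×d matrices over F. Then for any vertices x, y of Γ at distance j ≥ 2, the subgraph of Γ induced on the set of neighbours of x that are at distance j−1 from y is nonempty and connected. -/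
open SimpleGraph

/-- The bilinear forms graph on `e × d` matrices over a field `F`:
two matrices are adjacent iff their difference has rank 1. -/
def bilGraph (F : Type) [Field F] (e d : ℕ) : SimpleGraph (Matrix (Fin e) (Fin d) F) where
  Adj A B := A ≠ B ∧ (A - B).rank = 1
  symm := by
    constructor
    intro A B h
    refine ⟨h.1.symm, ?_⟩
    have hn : B - A = -(A - B) := by abel
    have hml : (-(A - B)).mulVecLin = -(A - B).mulVecLin := by
      ext v
      simp [Matrix.neg_mulVec]
    have hr : (-(A - B)).rank = (A - B).rank := by
      unfold Matrix.rank
      rw [hml, LinearMap.range_neg]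
    rw [hn, hr]
    exact h.2
  loopless := by constructor; intro A h; exact h.1 rfl

open Matrix

namespace BilAux
variable {F : Type} [Field F] {e d : ℕ}

lemma rank_neg (A : Matrix (Fin e) (Fin d) F) : (-A).rank = A.rank := by
  have hml : (-A).mulVecLin = -A.mulVecLin := by
    ext v; simp [Matrix.neg_mulVec]
  unfold Matrix.rank
  rw [hml, LinearMap.range_neg]

lemma rank_eq_zero_iff {A : Matrix (Fin e) (Fin d) F} : A.rank = 0 ↔ A = 0 := by
  constructor
  · intro h
    have : LinearMap.range A.mulVecLin = ⊥ := Submodule.finrank_eq_zero.mp h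
    ext i k
    have h1 : A.mulVecLin (Pi.single k 1) ∈ LinearMap.range A.mulVecLin :=
      LinearMap.mem_range_self _ _
    rw [this, Submodule.mem_bot] at h1
    have := congrFun h1 i
    simpa [Matrix.mulVecLin_apply, Matrix.mulVec_single] using this
  · rintro rfl; exact Matrix.rank_zero

lemma rank_add_le (A B : Matrix (Fin e) (Fin d) F) : (A + B).rank ≤ A.rank + B.rank := by
  have hr : LinearMap.range (A + B).mulVecLin ≤
      LinearMap.range A.mulVecLin ⊔ LinearMap.range B.mulVecLin := by
    rintro _ ⟨v, rfl⟩
    rw [Matrix.mulVecLin_add]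
    exact Submodule.add_mem_sup (LinearMap.mem_range_self _ v) (LinearMap.mem_range_self _ v)
  calc (A + B).rank ≤ Module.finrank F ↥(LinearMap.range A.mulVecLin ⊔ LinearMap.range B.mulVecLin) :=
        Submodule.finrank_mono hr
    _ ≤ A.rank + B.rank := Submodule.finrank_add_le_finrank_add_finrank _ _

lemma rank_vecMulVec_le (u : Fin e → F) (v : Fin d → F) : (vecMulVec u v).rank ≤ 1 := by
  have hr : LinearMap.range (vecMulVec u v).mulVecLin ≤ Submodule.span F {u} := by
    rintro _ ⟨w, rfl⟩
    rw [Matrix.mulVecLin_apply]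
    have : vecMulVec u v *ᵥ w = (v ⬝ᵥ w) • u := by
      ext i; simp [Matrix.mulVec, Matrix.vecMulVec_apply, dotProduct, Finset.mul_sum,
        mul_assoc, mul_comm, mul_left_comm]
    rw [this]
    exact Submodule.smul_mem _ _ (Submodule.mem_span_singleton_self u)
  calc (vecMulVec u v).rank ≤ Module.finrank F ↥(Submodule.span F {u}) := Submodule.finrank_mono hr
    _ ≤ 1 := by simpa using finrank_span_le_card ({u} : Set (Fin e → F))


lemma vecMulVec_mulVec (u : Fin e → F) (v : Fin d → F) (w : Fin d → F) :
    vecMulVec u v *ᵥ w = (v ⬝ᵥ w) • u := by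
  ext i
  simp only [Matrix.mulVec, Matrix.vecMulVec_apply, dotProduct, Pi.smul_apply,
    smul_eq_mul, Finset.sum_mul, Finset.mul_sum]
  exact Finset.sum_congr rfl fun _ _ => by ring

lemma dot_transpose (M : Matrix (Fin e) (Fin d) F) (c : Fin e → F) (w : Fin d → F) :
    c ⬝ᵥ (M *ᵥ w) = (Mᵀ *ᵥ c) ⬝ᵥ w := by
  rw [Matrix.dotProduct_mulVec, Matrix.mulVec_transpose]

/-- The linear functional `x ↦ c ⬝ᵥ x`. -/
def dotL (c : Fin e → F) : (Fin e → F) →ₗ[F] F where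
  toFun x := c ⬝ᵥ x
  map_add' a b := by simp [dotProduct_add]
  map_smul' r a := by simp [dotProduct_smul]

@[simp] lemma dotL_apply (c x : Fin e → F) : dotL c x = c ⬝ᵥ x := rfl

lemma wedderburn {M : Matrix (Fin e) (Fin d) F} {z : Fin d → F} {c : Fin e → F}
    (h : c ⬝ᵥ (M *ᵥ z) = 1) :
    (M - vecMulVec (M *ᵥ z) (Mᵀ *ᵥ c)).rank + 1 = M.rank := by
  set B := vecMulVec (M *ᵥ z) (Mᵀ *ᵥ c) with hB
  have hsub : ∀ w, (M - B) *ᵥ w = M *ᵥ w - ((Mᵀ *ᵥ c) ⬝ᵥ w) • (M *ᵥ z) := by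
    intro w
    rw [Matrix.sub_mulVec, hB, vecMulVec_mulVec]
  have hrange : LinearMap.range (M - B).mulVecLin ≤
      LinearMap.range M.mulVecLin ⊓ LinearMap.ker (dotL c) := by
    rintro _ ⟨w, rfl⟩
    refine ⟨⟨w - ((Mᵀ *ᵥ c) ⬝ᵥ w) • z, ?_⟩, ?_⟩
    · rw [Matrix.mulVecLin_apply, Matrix.mulVecLin_apply, Matrix.mulVec_sub,
        Matrix.mulVec_smul, hsub]
    · simp only [SetLike.mem_coe, LinearMap.mem_ker]
      rw [Matrix.mulVecLin_apply, hsub, dotL_apply,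
        dotProduct_sub, dotProduct_smul, h, dot_transpose]
      simp
  have hmem : M *ᵥ z ∈ LinearMap.range M.mulVecLin := ⟨z, by rw [Matrix.mulVecLin_apply]⟩
  have hlt : LinearMap.range M.mulVecLin ⊓ LinearMap.ker (dotL c) <
      LinearMap.range M.mulVecLin := by
    refine lt_of_le_of_ne inf_le_left fun heq => ?_
    have : M *ᵥ z ∈ LinearMap.range M.mulVecLin ⊓ LinearMap.ker (dotL c) := by
      rw [heq]; exact hmem
    have h0 : c ⬝ᵥ (M *ᵥ z) = 0 := this.2
    rw [h] at h0
    exact one_ne_zero h0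
  have hub : (M - B).rank < M.rank :=
    lt_of_le_of_lt (Submodule.finrank_mono hrange) (Submodule.finrank_lt_finrank_of_lt hlt)
  have hlb : M.rank ≤ (M - B).rank + 1 := by
    have hMB : M = (M - B) + B := by abel
    calc M.rank = ((M - B) + B).rank := by rw [← hMB]
      _ ≤ (M - B).rank + B.rank := rank_add_le _ _
      _ ≤ (M - B).rank + 1 := by
          have hBr : B.rank ≤ 1 := by rw [hB]; exact rank_vecMulVec_le _ _
          omega
  omega

lemma exists_vecMulVec {A : Matrix (Fin e) (Fin d) F} (h : A.rank ≤ 1) :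
    ∃ u v, A = vecMulVec u v := by
  rcases Nat.le_one_iff_eq_zero_or_eq_one.mp h with h0 | h1
  · exact ⟨0, 0, by rw [rank_eq_zero_iff.mp h0]; ext i k; simp [Matrix.vecMulVec_apply]⟩
  · obtain ⟨u, hu0, hu⟩ := finrank_eq_one_iff'.mp h1
    choose f hf using fun k : Fin d =>
      hu ⟨A.mulVecLin (Pi.single k 1), LinearMap.mem_range_self _ _⟩
    refine ⟨(u : Fin e → F), f, ?_⟩
    ext i k
    have := congrArg (fun q : ↥(LinearMap.range A.mulVecLin) => (q : Fin e → F) i) (hf k)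
    simp only [Submodule.coe_smul, Pi.smul_apply, smul_eq_mul, Matrix.mulVecLin_apply,
      Matrix.mulVec_single, mul_one, MulOpposite.op_one, one_smul, Matrix.col_apply] at this
    rw [Matrix.vecMulVec_apply, mul_comm]
    exact this.symm

lemma mem_col_space {M B : Matrix (Fin e) (Fin d) F} {u : Fin e → F} {v : Fin d → F}
    (hB : B = vecMulVec u v) (hlt : (M - B).rank < M.rank) :
    u ∈ LinearMap.range M.mulVecLin ∧
      LinearMap.range (M - B).mulVecLin ≤ LinearMap.range M.mulVecLin := by
  -- col M ≤ col (M - B) ⊔ span {u}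
  have hMw : ∀ w, M *ᵥ w = (M - B) *ᵥ w + (v ⬝ᵥ w) • u := by
    intro w
    rw [Matrix.sub_mulVec, hB, vecMulVec_mulVec]
    abel
  have hle : LinearMap.range M.mulVecLin ≤
      LinearMap.range (M - B).mulVecLin ⊔ Submodule.span F {u} := by
    rintro _ ⟨w, rfl⟩
    rw [Matrix.mulVecLin_apply, hMw]
    exact Submodule.add_mem_sup (LinearMap.mem_range_self _ w)
      (Submodule.smul_mem _ _ (Submodule.mem_span_singleton_self u))
  have hdim : Module.finrank F
      ↥(LinearMap.range (M - B).mulVecLin ⊔ Submodule.span F {u}) ≤ M.rank := by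
    calc Module.finrank F ↥(LinearMap.range (M - B).mulVecLin ⊔ Submodule.span F {u})
        ≤ (M - B).rank + Module.finrank F ↥(Submodule.span F {u}) :=
          Submodule.finrank_add_le_finrank_add_finrank _ _
      _ ≤ (M - B).rank + 1 := by
          have : Module.finrank F ↥(Submodule.span F ({u} : Set (Fin e → F))) ≤ 1 := by
            simpa using finrank_span_le_card ({u} : Set (Fin e → F))
          omega
      _ ≤ M.rank := hlt
  have heq : LinearMap.range M.mulVecLin =
      LinearMap.range (M - B).mulVecLin ⊔ Submodule.span F {u} :=
    Submodule.eq_of_le_of_finrank_le hle hdim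
  constructor
  · rw [heq]
    exact Submodule.mem_sup_right (Submodule.mem_span_singleton_self u)
  · rw [heq]
    exact le_sup_left

lemma good_of_rank_lt {M B : Matrix (Fin e) (Fin d) F}
    (hB1 : B.rank = 1) (hlt : (M - B).rank < M.rank) :
    ∃ z c, c ⬝ᵥ (M *ᵥ z) = 1 ∧ B = vecMulVec (M *ᵥ z) (Mᵀ *ᵥ c) := by
  obtain ⟨u, v, huv⟩ := exists_vecMulVec hB1.le
  have hcol := (mem_col_space huv hlt).1
  obtain ⟨z, hz⟩ := hcol
  rw [Matrix.mulVecLin_apply] at hz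
  -- transpose version
  have hBT : Bᵀ = vecMulVec v u := by
    ext k i; simp [huv, Matrix.vecMulVec_apply, mul_comm]
  have hltT : (Mᵀ - Bᵀ).rank < Mᵀ.rank := by
    have h1 : Mᵀ - Bᵀ = (M - B)ᵀ := by ext k i; simp [Matrix.sub_apply]
    rw [h1, Matrix.rank_transpose, Matrix.rank_transpose]
    exact hlt
  have hrow := (mem_col_space hBT hltT).1
  obtain ⟨c, hc⟩ := hrow
  rw [Matrix.mulVecLin_apply] at hc
  -- now B = vecMulVec (M *ᵥ z) (Mᵀ *ᵥ c)
  have hBeq : B = vecMulVec (M *ᵥ z) (Mᵀ *ᵥ c) := by rw [huv, hz, hc]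
  -- show the normalization c ⬝ᵥ (M *ᵥ z) = 1
  have hvz : (Mᵀ *ᵥ c) ⬝ᵥ z = c ⬝ᵥ (M *ᵥ z) := (dot_transpose M c z).symm
  by_cases ht : c ⬝ᵥ (M *ᵥ z) = 1
  · exact ⟨z, c, ht, hBeq⟩
  · exfalso
    -- then M *ᵥ z ∈ col (M - B), so col M ≤ col (M - B), contradiction
    have hu0 : u ≠ 0 := by
      rintro rfl
      have hB0 : B = 0 := by rw [huv]; ext i k; simp [Matrix.vecMulVec_apply]
      rw [hB0, Matrix.rank_zero] at hB1
      exact one_ne_zero hB1.symm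
    have hMBz : (M - B) *ᵥ z = (1 - c ⬝ᵥ (M *ᵥ z)) • (M *ᵥ z) := by
      rw [Matrix.sub_mulVec, hBeq, vecMulVec_mulVec, hvz, sub_smul, one_smul]
    have hne : (1 - c ⬝ᵥ (M *ᵥ z)) ≠ 0 := fun h0 => ht (by linear_combination -h0)
    have humem : u ∈ LinearMap.range (M - B).mulVecLin := by
      refine ⟨(1 - c ⬝ᵥ (M *ᵥ z))⁻¹ • z, ?_⟩
      rw [Matrix.mulVecLin_apply, Matrix.mulVec_smul, hMBz, smul_smul,
        inv_mul_cancel₀ hne, one_smul, hz]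
    -- col M ≤ col (M - B) ⊔ span u = col (M - B)
    have hspan : Submodule.span F {u} ≤ LinearMap.range (M - B).mulVecLin := by
      rw [Submodule.span_singleton_le_iff_mem]; exact humem
    have hMw : ∀ w, M *ᵥ w = (M - B) *ᵥ w + (v ⬝ᵥ w) • u := by
      intro w
      rw [Matrix.sub_mulVec, huv, vecMulVec_mulVec]
      abel
    have hle : LinearMap.range M.mulVecLin ≤ LinearMap.range (M - B).mulVecLin := by
      rintro _ ⟨w, rfl⟩
      rw [Matrix.mulVecLin_apply, hMw]
      exact Submodule.add_mem _ (LinearMap.mem_range_self _ w)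
        (Submodule.smul_mem _ _ (hspan (Submodule.mem_span_singleton_self u)))
    have hfinal : M.rank ≤ (M - B).rank := Submodule.finrank_mono hle
    omega

lemma pick_entry {M : Matrix (Fin e) (Fin d) F} (hM : M ≠ 0) :
    ∃ z c, c ⬝ᵥ (M *ᵥ z) = (1 : F) := by
  obtain ⟨i, k, hik⟩ : ∃ i k, M i k ≠ 0 := by
    by_contra hc
    push_neg at hc
    exact hM (by ext i k; simpa using hc i k)
  refine ⟨(M i k)⁻¹ • (Pi.single k 1 : Fin d → F), Pi.single i 1, ?_⟩
  rw [Matrix.mulVec_smul, Matrix.mulVec_single]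
  simp [single_dotProduct, inv_mul_cancel₀ hik]

lemma rank_good {M : Matrix (Fin e) (Fin d) F} {z : Fin d → F} {c : Fin e → F}
    (h : c ⬝ᵥ (M *ᵥ z) = 1) : (vecMulVec (M *ᵥ z) (Mᵀ *ᵥ c)).rank = 1 := by
  have hle := rank_vecMulVec_le (M *ᵥ z) (Mᵀ *ᵥ c)
  have hw := wedderburn h
  have hne : (vecMulVec (M *ᵥ z) (Mᵀ *ᵥ c)).rank ≠ 0 := by
    intro h0
    rw [rank_eq_zero_iff] at h0
    rw [h0, sub_zero] at hw
    omega
  omega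

lemma exists_walk : ∀ (n : ℕ) (A B : Matrix (Fin e) (Fin d) F), (A - B).rank ≤ n →
    ∃ p : (bilGraph F e d).Walk A B, p.length ≤ n := by
  intro n
  induction n with
  | zero =>
    intro A B h
    have hAB : A = B := by
      have h0 := rank_eq_zero_iff.mp (Nat.le_zero.mp h)
      exact sub_eq_zero.mp h0
    subst hAB
    exact ⟨SimpleGraph.Walk.nil, le_refl _⟩
  | succ n ih =>
    intro A B h
    by_cases h' : (A - B).rank ≤ n
    · obtain ⟨p, hp⟩ := ih A B h'
      exact ⟨p, hp.trans (Nat.le_succ n)⟩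
    · have hM0 : A - B ≠ 0 := by
        intro h0
        rw [h0, Matrix.rank_zero] at h'
        omega
      obtain ⟨z, c, hcz⟩ := pick_entry hM0
      set B' := vecMulVec ((A - B) *ᵥ z) ((A - B)ᵀ *ᵥ c) with hB'
      have hw := wedderburn hcz
      rw [← hB'] at hw
      have hB'1 : B'.rank = 1 := rank_good hcz
      have h1 : (A - B' - B).rank ≤ n := by
        have he : A - B' - B = (A - B) - B' := by abel
        rw [he]
        omega
      obtain ⟨p, hp⟩ := ih (A - B') B h1
      have hB'ne : B' ≠ 0 := by
        intro h0
        rw [h0, Matrix.rank_zero] at hB'1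
        exact one_ne_zero hB'1.symm
      have hadj : (bilGraph F e d).Adj A (A - B') := by
        refine ⟨?_, ?_⟩
        · intro hEq
          apply hB'ne
          have h2 : A - (A - B') = 0 := by rw [← hEq]; simp
          calc B' = A - (A - B') := by abel
            _ = 0 := h2
        · have : A - (A - B') = B' := by abel
          rw [this]
          exact hB'1
      exact ⟨SimpleGraph.Walk.cons hadj p, by
        rw [SimpleGraph.Walk.length_cons]; omega⟩

lemma rank_le_length {A B : Matrix (Fin e) (Fin d) F} (p : (bilGraph F e d).Walk A B) :
    (A - B).rank ≤ p.length := by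
  induction p with
  | nil => simp [sub_self, Matrix.rank_zero]
  | @cons u v w h p ih =>
    have he : u - w = (u - v) + (v - w) := by abel
    rw [SimpleGraph.Walk.length_cons, he]
    calc ((u - v) + (v - w)).rank ≤ (u - v).rank + (v - w).rank := rank_add_le _ _
      _ ≤ 1 + p.length := by
          rw [h.2]
          omega
      _ = p.length + 1 := by omega

lemma bil_dist (A B : Matrix (Fin e) (Fin d) F) :
    (bilGraph F e d).dist A B = (A - B).rank := by
  obtain ⟨p, hp⟩ := exists_walk ((A - B).rank) A B le_rfl
  have hreach : (bilGraph F e d).Reachable A B := ⟨p⟩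
  refine le_antisymm ((SimpleGraph.dist_le p).trans hp) ?_
  obtain ⟨q, hq⟩ := hreach.exists_walk_length_eq_dist
  calc (A - B).rank ≤ q.length := rank_le_length q
    _ = (bilGraph F e d).dist A B := hq

lemma exists_dot_ne {u₁ u₂ : Fin e → F} (h1 : u₁ ≠ 0) (h2 : u₂ ≠ 0) :
    ∃ c : Fin e → F, c ⬝ᵥ u₁ ≠ 0 ∧ c ⬝ᵥ u₂ ≠ 0 := by
  obtain ⟨i₁, hi₁⟩ : ∃ i, u₁ i ≠ 0 := by
    by_contra h; push_neg at h; exact h1 (funext h)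
  obtain ⟨i₂, hi₂⟩ : ∃ i, u₂ i ≠ 0 := by
    by_contra h; push_neg at h; exact h2 (funext h)
  have d11 : (Pi.single i₁ 1 : Fin e → F) ⬝ᵥ u₁ = u₁ i₁ := by
    simp [single_dotProduct]
  have d22 : (Pi.single i₂ 1 : Fin e → F) ⬝ᵥ u₂ = u₂ i₂ := by
    simp [single_dotProduct]
  by_cases h12 : (Pi.single i₁ 1 : Fin e → F) ⬝ᵥ u₂ ≠ 0
  · exact ⟨_, by rw [d11]; exact hi₁, h12⟩
  by_cases h21 : (Pi.single i₂ 1 : Fin e → F) ⬝ᵥ u₁ ≠ 0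
  · exact ⟨_, h21, by rw [d22]; exact hi₂⟩
  push_neg at h12 h21
  refine ⟨(Pi.single i₁ 1 : Fin e → F) + Pi.single i₂ 1, ?_, ?_⟩
  · rw [add_dotProduct, d11, h21, add_zero]
    exact hi₁
  · rw [add_dotProduct, d22, h12, zero_add]
    exact hi₂

end BilAux

open BilAux

/-- In the bilinear forms graph on `e × d` matrices over a finite field
(`e ≥ d ≥ 2`), for vertices `x, y` at distance `j ≥ 2`, the subgraph induced on the
neighbours of `x` at distance `j - 1` from `y` is nonempty and connected. -/
theorem bil_c_graph_connected (F : Type) [Field F] [Fintype F]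
    (e d : ℕ) (hd : 2 ≤ d) (hde : d ≤ e)
    (x y : Matrix (Fin e) (Fin d) F) (j : ℕ) (hj : 2 ≤ j)
    (hxy : (bilGraph F e d).dist x y = j) :
    {w : Matrix (Fin e) (Fin d) F |
        (bilGraph F e d).Adj x w ∧ (bilGraph F e d).dist y w = j - 1}.Nonempty ∧
      ((bilGraph F e d).induce
        {w : Matrix (Fin e) (Fin d) F |
          (bilGraph F e d).Adj x w ∧ (bilGraph F e d).dist y w = j - 1}).Connected := by
  classical
  set M := x - y with hM
  have hrkM : M.rank = j := by rw [← hxy, bil_dist]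
  set S := {w : Matrix (Fin e) (Fin d) F |
      (bilGraph F e d).Adj x w ∧ (bilGraph F e d).dist y w = j - 1} with hS
  have hmem : ∀ w, w ∈ S ↔
      ∃ z c, c ⬝ᵥ (M *ᵥ z) = 1 ∧ x - w = vecMulVec (M *ᵥ z) (Mᵀ *ᵥ c) := by
    intro w
    constructor
    · rintro ⟨hadj, hdist⟩
      obtain ⟨hne, hr1⟩ : x ≠ w ∧ (x - w).rank = 1 := hadj
      have hr2 : (y - w).rank = j - 1 := by rw [bil_dist] at hdist; exact hdist
      have hlt : (M - (x - w)).rank < M.rank := by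
        have hMB : M - (x - w) = -(y - w) := by rw [hM]; abel
        rw [hMB, rank_neg, hr2, hrkM]
        omega
      exact good_of_rank_lt hr1 hlt
    · rintro ⟨z, c, hzc, hBw⟩
      have hw := wedderburn hzc
      have hr1 : (x - w).rank = 1 := by rw [hBw]; exact rank_good hzc
      refine ⟨⟨?_, hr1⟩, ?_⟩
      · intro hEq
        rw [hEq, sub_self, Matrix.rank_zero] at hr1
        exact one_ne_zero hr1.symm
      · rw [bil_dist]
        have hyw : y - w = -(M - (x - w)) := by rw [hM]; abel
        rw [hyw, rank_neg, hBw]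
        omega
  have hMne : M ≠ 0 := fun h0 => by
    rw [h0, Matrix.rank_zero] at hrkM; omega
  obtain ⟨z₀, c₀, hzc₀⟩ := pick_entry hMne
  have hw0 : (x - vecMulVec (M *ᵥ z₀) (Mᵀ *ᵥ c₀)) ∈ S :=
    (hmem _).mpr ⟨z₀, c₀, hzc₀, by abel⟩
  refine ⟨⟨_, hw0⟩, ?_⟩
  rw [SimpleGraph.connected_iff]
  refine ⟨?_, ⟨⟨_, hw0⟩⟩⟩
  -- step helper
  have step : ∀ (a b : Matrix (Fin e) (Fin d) F) (ha : a ∈ S) (hb : b ∈ S),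
      (b - a).rank ≤ 1 →
      ((bilGraph F e d).induce S).Reachable ⟨a, ha⟩ ⟨b, hb⟩ := by
    intro a b ha hb hr
    by_cases hab : a = b
    · have : (⟨a, ha⟩ : S) = ⟨b, hb⟩ := Subtype.ext hab
      rw [this]
    · have hadj : (bilGraph F e d).Adj a b := by
        refine ⟨hab, ?_⟩
        have h0 : (a - b).rank ≠ 0 := fun h0 =>
          hab (sub_eq_zero.mp (rank_eq_zero_iff.mp h0))
        have hsym : (a - b).rank = (b - a).rank := by
          rw [show a - b = -(b - a) by abel, rank_neg]
        omega
      exact SimpleGraph.Adj.reachable hadj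
  rintro ⟨w₁, hw₁⟩ ⟨w₂, hw₂⟩
  obtain ⟨z₁, c₁, hzc₁, hB₁⟩ := (hmem w₁).mp hw₁
  obtain ⟨z₂, c₂, hzc₂, hB₂⟩ := (hmem w₂).mp hw₂
  have hu₁ : M *ᵥ z₁ ≠ 0 := fun h0 => by
    rw [h0, dotProduct_zero] at hzc₁; exact one_ne_zero hzc₁.symm
  have hu₂ : M *ᵥ z₂ ≠ 0 := fun h0 => by
    rw [h0, dotProduct_zero] at hzc₂; exact one_ne_zero hzc₂.symm
  obtain ⟨c, hc₁, hc₂⟩ := exists_dot_ne hu₁ hu₂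
  set s₁ := c ⬝ᵥ (M *ᵥ z₁) with hs₁
  set s₂ := c ⬝ᵥ (M *ᵥ z₂) with hs₂
  have hzc₁' : c ⬝ᵥ (M *ᵥ (s₁⁻¹ • z₁)) = 1 := by
    rw [Matrix.mulVec_smul, dotProduct_smul, smul_eq_mul, ← hs₁,
      inv_mul_cancel₀ hc₁]
  have hzc₂' : c ⬝ᵥ (M *ᵥ (s₂⁻¹ • z₂)) = 1 := by
    rw [Matrix.mulVec_smul, dotProduct_smul, smul_eq_mul, ← hs₂,
      inv_mul_cancel₀ hc₂]
  set w₁' := x - vecMulVec (M *ᵥ (s₁⁻¹ • z₁)) (Mᵀ *ᵥ c) with hw₁'def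
  set w₂' := x - vecMulVec (M *ᵥ (s₂⁻¹ • z₂)) (Mᵀ *ᵥ c) with hw₂'def
  have hw₁' : w₁' ∈ S := (hmem _).mpr ⟨s₁⁻¹ • z₁, c, hzc₁', by rw [hw₁'def]; abel⟩
  have hw₂' : w₂' ∈ S := (hmem _).mpr ⟨s₂⁻¹ • z₂, c, hzc₂', by rw [hw₂'def]; abel⟩
  have hwx₁ : w₁ = x - vecMulVec (M *ᵥ z₁) (Mᵀ *ᵥ c₁) := by
    rw [← hB₁]; abel
  have hwx₂ : w₂ = x - vecMulVec (M *ᵥ z₂) (Mᵀ *ᵥ c₂) := by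
    rw [← hB₂]; abel
  have r1 : ((bilGraph F e d).induce S).Reachable ⟨w₁, hw₁⟩ ⟨w₁', hw₁'⟩ := by
    apply step
    have hd1 : w₁' - w₁ =
        vecMulVec (M *ᵥ z₁) (Mᵀ *ᵥ c₁ - s₁⁻¹ • (Mᵀ *ᵥ c)) := by
      rw [hw₁'def, hwx₁]
      ext i k
      simp only [Matrix.sub_apply, Matrix.vecMulVec_apply, Matrix.mulVec_smul,
        Pi.smul_apply, Pi.sub_apply, smul_eq_mul]
      ring
    rw [hd1]
    exact BilAux.rank_vecMulVec_le _ _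
  have r2 : ((bilGraph F e d).induce S).Reachable ⟨w₁', hw₁'⟩ ⟨w₂', hw₂'⟩ := by
    apply step
    have hd2 : w₂' - w₁' =
        vecMulVec (M *ᵥ (s₁⁻¹ • z₁) - M *ᵥ (s₂⁻¹ • z₂)) (Mᵀ *ᵥ c) := by
      rw [hw₁'def, hw₂'def]
      ext i k
      simp only [Matrix.sub_apply, Matrix.vecMulVec_apply, Pi.sub_apply]
      ring
    rw [hd2]
    exact BilAux.rank_vecMulVec_le _ _
  have r3 : ((bilGraph F e d).induce S).Reachable ⟨w₂, hw₂⟩ ⟨w₂', hw₂'⟩ := by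
    apply step
    have hd3 : w₂' - w₂ =
        vecMulVec (M *ᵥ z₂) (Mᵀ *ᵥ c₂ - s₂⁻¹ • (Mᵀ *ᵥ c)) := by
      rw [hw₂'def, hwx₂]
      ext i k
      simp only [Matrix.sub_apply, Matrix.vecMulVec_apply, Matrix.mulVec_smul,
        Pi.smul_apply, Pi.sub_apply, smul_eq_mul]
      ring
    rw [hd3]
    exact BilAux.rank_vecMulVec_le _ _
  exact (r1.trans r2).trans r3.symm
end

section
/- Let F be a finite field and let e ≥ d ≥ 2 be integers. Let Γ be the bilinear forms graph on e×d matrices over F. If x is a vertex of Γ and y_1, y_2 are adjacent vertices both at distance j ≥ 2 from x, then there exists a neighbour of x that is at distance j−1 from both y_1 and y_2. -/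
open SimpleGraph

section Aux
open Matrix
variable {F : Type} [Field F] {e d : ℕ}

private lemma rank_neg' (A : Matrix (Fin e) (Fin d) F) : (-A).rank = A.rank := by
  have hml : (-A).mulVecLin = -A.mulVecLin := by
    ext v; simp [Matrix.neg_mulVec]
  unfold Matrix.rank
  rw [hml, LinearMap.range_neg]

private lemma mulVec_vmv (u : Fin e → F) (v x : Fin d → F) :
    (Matrix.vecMulVec u v) *ᵥ x = (v ⬝ᵥ x) • u := by
  ext i
  simp only [Matrix.mulVec, dotProduct, Matrix.vecMulVec_apply, Pi.smul_apply,
    smul_eq_mul, Finset.sum_mul]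
  exact Finset.sum_congr rfl fun j _ => by ring

private lemma vecMul_vmv (u : Fin e → F) (v : Fin d → F) (w : Fin e → F) :
    w ᵥ* (Matrix.vecMulVec u v) = (w ⬝ᵥ u) • v := by
  ext j
  simp only [Matrix.vecMul, dotProduct, Matrix.vecMulVec_apply, Pi.smul_apply,
    smul_eq_mul]
  rw [Finset.sum_mul]
  exact Finset.sum_congr rfl fun i _ => by ring

private lemma rank_vmv_le (u : Fin e → F) (v : Fin d → F) :
    (Matrix.vecMulVec u v).rank ≤ 1 := by
  rw [Matrix.vecMulVec_eq Unit u v]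
  exact le_trans (Matrix.rank_mul_le_left _ _)
    (le_trans (Matrix.rank_le_card_width _) (by simp))

private lemma one_le_rank_of_ne (A : Matrix (Fin e) (Fin d) F) (h : A ≠ 0) : 1 ≤ A.rank := by
  by_contra hc
  have h0 : A.rank = 0 := by omega
  have hr : LinearMap.range A.mulVecLin = ⊥ := Submodule.finrank_eq_zero.mp h0
  apply h
  ext i j
  have : A *ᵥ Pi.single j 1 = 0 := by
    have : A.mulVecLin (Pi.single j 1) ∈ (⊥ : Submodule F (Fin e → F)) :=
      hr ▸ LinearMap.mem_range_self _ _
    simpa [Matrix.mulVecLin_apply] using this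
  have := congrFun this i
  simpa [Matrix.mulVec_single] using this

private lemma eq_zero_of_rank_eq_zero {A : Matrix (Fin e) (Fin d) F} (h : A.rank = 0) :
    A = 0 := by
  by_contra hne
  have := one_le_rank_of_ne A hne
  omega

private lemma rank_add_le' (A B : Matrix (Fin e) (Fin d) F) :
    (A + B).rank ≤ A.rank + B.rank := by
  have hle : LinearMap.range (A + B).mulVecLin ≤
      LinearMap.range A.mulVecLin ⊔ LinearMap.range B.mulVecLin := by
    rintro _ ⟨y, rfl⟩
    rw [Matrix.mulVecLin_apply, Matrix.add_mulVec]
    exact Submodule.add_mem_sup (LinearMap.mem_range_self _ _) (LinearMap.mem_range_self _ _)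
  exact le_trans (Submodule.finrank_mono hle)
    (Submodule.finrank_add_le_finrank_add_finrank _ _)



/-- The rank-one pivot matrix attached to `A`, `w`, `z`. -/
private def pivotC (A : Matrix (Fin e) (Fin d) F) (w : Fin e → F) (z : Fin d → F) :
    Matrix (Fin e) (Fin d) F :=
  Matrix.vecMulVec ((w ⬝ᵥ (A *ᵥ z))⁻¹ • (A *ᵥ z)) (w ᵥ* A)

private lemma pivotC_mulVec (A : Matrix (Fin e) (Fin d) F) (w : Fin e → F) (z : Fin d → F)
    (hc : w ⬝ᵥ (A *ᵥ z) ≠ 0) (x : Fin d → F) :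
    (pivotC A w z) *ᵥ x = ((w ⬝ᵥ (A *ᵥ x)) * (w ⬝ᵥ (A *ᵥ z))⁻¹) • (A *ᵥ z) := by
  rw [pivotC, mulVec_vmv]
  rw [← Matrix.dotProduct_mulVec]
  rw [smul_smul]

private lemma pivotC_rank_one (A : Matrix (Fin e) (Fin d) F) (w : Fin e → F) (z : Fin d → F)
    (hc : w ⬝ᵥ (A *ᵥ z) ≠ 0) : (pivotC A w z).rank = 1 := by
  refine le_antisymm (rank_vmv_le _ _) (one_le_rank_of_ne _ ?_)
  intro h0
  have h1 : (pivotC A w z) *ᵥ z = A *ᵥ z := by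
    rw [pivotC_mulVec A w z hc z, mul_inv_cancel₀ hc, one_smul]
  rw [h0, Matrix.zero_mulVec] at h1
  exact hc (by rw [← h1, dotProduct_zero])

private lemma pivot_rank (A : Matrix (Fin e) (Fin d) F) (w : Fin e → F) (z : Fin d → F)
    (hc : w ⬝ᵥ (A *ᵥ z) ≠ 0) : (A - pivotC A w z).rank + 1 = A.rank := by
  set C := pivotC A w z with hC
  -- the dot-product-with-w functional
  let φ : (Fin e → F) →ₗ[F] F :=
    { toFun := fun x => w ⬝ᵥ x
      map_add' := fun a b => dotProduct_add w a b
      map_smul' := fun c a => by simp [dotProduct_smul] }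
  have hw : ∀ x, w ⬝ᵥ ((A - C) *ᵥ x) = 0 := by
    intro x
    rw [Matrix.sub_mulVec, dotProduct_sub, hC, pivotC_mulVec A w z hc x,
      dotProduct_smul]
    rw [smul_eq_mul, mul_assoc, inv_mul_cancel₀ hc, mul_one, sub_self]
  have hle : LinearMap.range (A - C).mulVecLin ≤
      LinearMap.range A.mulVecLin ⊓ LinearMap.ker φ := by
    rintro _ ⟨y, rfl⟩
    refine ⟨?_, ?_⟩
    · rw [Matrix.mulVecLin_apply, Matrix.sub_mulVec]
      have h1 : A *ᵥ y - C *ᵥ y = A *ᵥ y - ((w ⬝ᵥ (A *ᵥ y)) * (w ⬝ᵥ (A *ᵥ z))⁻¹) • (A *ᵥ z) := by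
        rw [hC, pivotC_mulVec A w z hc y]
      rw [h1, sub_eq_add_neg, ← neg_smul]
      exact Submodule.add_mem _ (LinearMap.mem_range_self _ _)
        (Submodule.smul_mem _ _ (LinearMap.mem_range_self _ _))
    · exact hw y
  have hlt : LinearMap.range A.mulVecLin ⊓ LinearMap.ker φ < LinearMap.range A.mulVecLin := by
    refine lt_of_le_of_ne inf_le_left ?_
    intro heq
    have hmem : A *ᵥ z ∈ LinearMap.range A.mulVecLin ⊓ LinearMap.ker φ := by
      rw [heq]; exact LinearMap.mem_range_self _ z
    exact hc hmem.2
  have h2 : (A - C).rank < A.rank :=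
    lt_of_le_of_lt (Submodule.finrank_mono hle) (Submodule.finrank_lt_finrank_of_lt hlt)
  have h3 : A.rank ≤ (A - C).rank + 1 := by
    have : A = (A - C) + C := by abel
    calc A.rank = ((A - C) + C).rank := by rw [← this]
      _ ≤ (A - C).rank + C.rank := rank_add_le' _ _
      _ ≤ (A - C).rank + 1 := by
          have hC1 : C.rank ≤ 1 := by rw [hC, pivotC]; exact rank_vmv_le _ _
          omega
  omega

private lemma rank_one_decomp (R : Matrix (Fin e) (Fin d) F) (h : R.rank = 1) :
    ∃ u v, u ≠ 0 ∧ v ≠ 0 ∧ R = Matrix.vecMulVec u v := by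
  have hR0 : R ≠ 0 := by
    intro h0; rw [h0, Matrix.rank_zero] at h; omega
  obtain ⟨i, jx, hij⟩ : ∃ i jx, R i jx ≠ 0 := by
    by_contra hcon
    push_neg at hcon
    exact hR0 (by ext i jx; simpa using hcon i jx)
  set w : Fin e → F := Pi.single i 1 with hwdef
  set z : Fin d → F := Pi.single jx 1 with hzdef
  have hc : w ⬝ᵥ (R *ᵥ z) ≠ 0 := by
    rw [hwdef, hzdef]
    simpa [Matrix.mulVec_single, single_dotProduct] using hij
  have h1 := pivot_rank R w z hc
  rw [h] at h1
  have h2 : (R - pivotC R w z).rank = 0 := by omega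
  have h3 : R = pivotC R w z := sub_eq_zero.mp (eq_zero_of_rank_eq_zero h2)
  refine ⟨(w ⬝ᵥ (R *ᵥ z))⁻¹ • (R *ᵥ z), w ᵥ* R, ?_, ?_, h3⟩
  · intro h0
    have : R *ᵥ z ≠ 0 := fun hz0 => hc (by rw [hz0, dotProduct_zero])
    exact this (by
      have := smul_ne_zero (inv_ne_zero hc) this
      exact absurd h0 this)
  · intro h0
    apply hc
    rw [Matrix.dotProduct_mulVec, h0, zero_dotProduct]


private lemma exists_walk_rank : ∀ (r : ℕ) (A B : Matrix (Fin e) (Fin d) F),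
    (A - B).rank = r → ∃ p : (bilGraph F e d).Walk A B, p.length = r := by
  intro r
  induction r with
  | zero =>
    intro A B h
    have hAB : A = B := sub_eq_zero.mp (eq_zero_of_rank_eq_zero h)
    subst hAB
    exact ⟨SimpleGraph.Walk.nil, rfl⟩
  | succ r ih =>
    intro A B h
    have hAB : A - B ≠ 0 := by
      intro h0; rw [h0, Matrix.rank_zero] at h; omega
    obtain ⟨i, jx, hij⟩ : ∃ i jx, (A - B) i jx ≠ 0 := by
      by_contra hcon
      push_neg at hcon
      exact hAB (by ext i jx; simpa using hcon i jx)
    set w : Fin e → F := Pi.single i 1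
    set z : Fin d → F := Pi.single jx 1
    have hc : w ⬝ᵥ ((A - B) *ᵥ z) ≠ 0 := by
      simpa [w, z, Matrix.mulVec_single, single_dotProduct] using hij
    set C := pivotC (A - B) w z with hCdef
    have hC1 : C.rank = 1 := pivotC_rank_one (A - B) w z hc
    have hCne : C ≠ 0 := by
      intro h0; rw [h0, Matrix.rank_zero] at hC1; omega
    have hpiv := pivot_rank (A - B) w z hc
    rw [h] at hpiv
    have hadj : (bilGraph F e d).Adj A (A - C) := by
      refine ⟨fun hEq => hCne ?_, ?_⟩
      · have : A - (A - C) = 0 := by rw [← hEq]; abel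
        have h2 : A - (A - C) = C := by abel
        rw [h2] at this; exact this
      · have h2 : A - (A - C) = C := by abel
        rw [h2]; exact hC1
    have hr : ((A - C) - B).rank = r := by
      have h2 : (A - C) - B = (A - B) - C := by abel
      rw [h2, hCdef]; omega
    obtain ⟨p, hp⟩ := ih (A - C) B hr
    exact ⟨SimpleGraph.Walk.cons hadj p, by simp [hp]⟩

private lemma rank_le_walk_length {A B : Matrix (Fin e) (Fin d) F}
    (p : (bilGraph F e d).Walk A B) : (A - B).rank ≤ p.length := by
  induction p with
  | nil => simp [sub_self, Matrix.rank_zero]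
  | @cons u v b h p ih =>
    have h1 : u - b = (u - v) + (v - b) := by abel
    rw [SimpleGraph.Walk.length_cons, h1]
    have h2 := rank_add_le' (u - v) (v - b)
    have h3 : (u - v).rank = 1 := h.2
    omega

private lemma dist_eq_rank (A B : Matrix (Fin e) (Fin d) F) :
    (bilGraph F e d).dist A B = (A - B).rank := by
  obtain ⟨p, hp⟩ := exists_walk_rank ((A - B).rank) A B rfl
  refine le_antisymm (hp ▸ SimpleGraph.dist_le p) ?_
  obtain ⟨q, hq⟩ := SimpleGraph.Reachable.exists_walk_length_eq_dist ⟨p⟩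
  exact hq ▸ rank_le_walk_length q
private lemma rank_vmv_one {u : Fin e → F} {v : Fin d → F} (hu : u ≠ 0) (hv : v ≠ 0) :
    (Matrix.vecMulVec u v).rank = 1 := by
  refine le_antisymm (rank_vmv_le _ _) (one_le_rank_of_ne _ ?_)
  obtain ⟨i, hi⟩ := Function.ne_iff.mp hu
  obtain ⟨jx, hj⟩ := Function.ne_iff.mp hv
  have hi' : u i ≠ 0 := by simpa using hi
  have hj' : v jx ≠ 0 := by simpa using hj
  intro h0
  have h1 := congrFun (congrFun h0 i) jx
  simp only [Matrix.vecMulVec_apply, Matrix.zero_apply, mul_eq_zero] at h1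
  tauto

private lemma span_of_dual {u : Fin e → F} (hu : u ≠ 0) (m : Fin e → F)
    (h : ∀ w : Fin e → F, w ⬝ᵥ u = 0 → w ⬝ᵥ m = 0) : ∃ c : F, m = c • u := by
  obtain ⟨i₀, hi₀⟩ := Function.ne_iff.mp hu
  have hi₀' : u i₀ ≠ 0 := by simpa using hi₀
  refine ⟨m i₀ / u i₀, funext fun k => ?_⟩
  have hw := h (Pi.single k 1 - (u k / u i₀) • (Pi.single i₀ 1 : Fin e → F)) ?_
  · rw [sub_dotProduct, smul_dotProduct, single_dotProduct,
      single_dotProduct, sub_eq_zero] at hw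
    simp only [one_mul, smul_eq_mul] at hw
    rw [Pi.smul_apply, smul_eq_mul, hw]
    field_simp
  · rw [sub_dotProduct, smul_dotProduct, single_dotProduct,
      single_dotProduct]
    simp only [one_mul, smul_eq_mul]
    field_simp
    ring

private lemma key (A B : Matrix (Fin e) (Fin d) F) (j : ℕ) (hj : 2 ≤ j)
    (hA : A.rank = j) (hB : B.rank = j) (hR : (B - A).rank = 1) :
    ∃ C : Matrix (Fin e) (Fin d) F, C.rank = 1 ∧ (A - C).rank = j - 1 ∧
      (B - C).rank = j - 1 := by
  obtain ⟨u, v, hu, hv, hR2⟩ := rank_one_decomp (B - A) hR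
  have hBA : B = A + Matrix.vecMulVec u v := by rw [← hR2]; abel
  by_cases hcase : ∃ w z, w ⬝ᵥ u = 0 ∧ v ⬝ᵥ z = 0 ∧ w ⬝ᵥ (A *ᵥ z) ≠ 0
  · obtain ⟨w, z, hwu, hvz, hc⟩ := hcase
    refine ⟨pivotC A w z, pivotC_rank_one A w z hc, ?_, ?_⟩
    · have := pivot_rank A w z hc; omega
    · have hBz : B *ᵥ z = A *ᵥ z := by
        rw [hBA, Matrix.add_mulVec, mulVec_vmv, hvz, zero_smul, add_zero]
      have hwB : w ᵥ* B = w ᵥ* A := by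
        rw [hBA, Matrix.vecMul_add, vecMul_vmv, hwu, zero_smul, add_zero]
      have hcB : w ⬝ᵥ (B *ᵥ z) ≠ 0 := by rw [hBz]; exact hc
      have hCeq : pivotC B w z = pivotC A w z := by rw [pivotC, pivotC, hBz, hwB]
      have hpr := pivot_rank B w z hcB
      rw [hCeq, hB] at hpr
      omega
  · push_neg at hcase
    obtain ⟨i₀, hi₀⟩ := Function.ne_iff.mp hu
    have hi₀' : u i₀ ≠ 0 := by simpa using hi₀
    obtain ⟨j₀, hj₀⟩ := Function.ne_iff.mp hv
    have hj₀' : v j₀ ≠ 0 := by simpa using hj₀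
    set w₀ : Fin e → F := (u i₀)⁻¹ • (Pi.single i₀ 1 : Fin e → F) with hw₀def
    have hw₀u : w₀ ⬝ᵥ u = 1 := by
      rw [hw₀def, smul_dotProduct, single_dotProduct]
      simp [inv_mul_cancel₀ hi₀']
    set z₀ : Fin d → F := (v j₀)⁻¹ • (Pi.single j₀ 1 : Fin d → F) with hz₀def
    have hvz₀ : v ⬝ᵥ z₀ = 1 := by
      rw [hz₀def, dotProduct_smul, dotProduct_single]
      simp [smul_eq_mul, mul_inv_cancel₀ hj₀', mul_comm]
    set b : Fin e → F := A *ᵥ z₀ with hbdef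
    have hkey : ∀ z', v ⬝ᵥ z' = 0 → A *ᵥ z' = (w₀ ⬝ᵥ (A *ᵥ z')) • u := by
      intro z' hz'
      obtain ⟨c, hcc⟩ := span_of_dual hu (A *ᵥ z') (fun w hw => hcase w z' hw hz')
      rw [hcc, dotProduct_smul, hw₀u, smul_eq_mul, mul_one]
    set a : Fin d → F := fun k => w₀ ⬝ᵥ (A *ᵥ (Pi.single k 1 - v k • z₀)) with hadef
    have hA2 : A = Matrix.vecMulVec u a + Matrix.vecMulVec b v := by
      ext i k
      have h1 : v ⬝ᵥ (Pi.single k 1 - v k • z₀) = 0 := by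
        rw [dotProduct_sub, dotProduct_smul, hvz₀, dotProduct_single]
        simp
      have h2 := hkey _ h1
      have h4 : a k = w₀ ⬝ᵥ (A *ᵥ (Pi.single k 1 - v k • z₀)) := by rw [hadef]
      rw [← h4, Matrix.mulVec_sub, Matrix.mulVec_smul, ← hbdef] at h2
      have h3 := congrFun h2 i
      simp only [Pi.sub_apply, Pi.smul_apply, smul_eq_mul, Matrix.mulVec_single_one, Matrix.col_apply, mul_one] at h3
      simp only [Matrix.add_apply, Matrix.vecMulVec_apply]
      linear_combination h3
    have hj2 : j = 2 := by
      have h1 : A.rank ≤ 2 := by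
        rw [hA2]
        have h5 := rank_add_le' (Matrix.vecMulVec u a) (Matrix.vecMulVec b v)
        have h2 := rank_vmv_le u a
        have h3 := rank_vmv_le b v
        omega
      omega
    have hAC : A - Matrix.vecMulVec u (a + v) = Matrix.vecMulVec (b - u) v := by
      rw [hA2]; ext i k
      simp only [Matrix.sub_apply, Matrix.add_apply, Matrix.vecMulVec_apply, Pi.add_apply,
        Pi.sub_apply]
      ring
    have hBC : B - Matrix.vecMulVec u (a + v) = Matrix.vecMulVec b v := by
      rw [hBA, hA2]; ext i k
      simp only [Matrix.sub_apply, Matrix.add_apply, Matrix.vecMulVec_apply, Pi.add_apply,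
        Pi.sub_apply]
      ring
    have hbu : b - u ≠ 0 := by
      intro h0
      have h5 : A = Matrix.vecMulVec u (a + v) := by
        have h6 := hAC
        rw [h0] at h6
        have h7 : Matrix.vecMulVec (0 : Fin e → F) v = 0 := by
          ext i k; simp [Matrix.vecMulVec_apply]
        rw [h7] at h6
        exact sub_eq_zero.mp h6
      have h8 : A.rank ≤ 1 := h5 ▸ rank_vmv_le u (a + v)
      omega
    have hav : a + v ≠ 0 := by
      intro h0
      have h5 : A = Matrix.vecMulVec (b - u) v := by
        have h6 := eq_add_of_sub_eq hAC
        rw [h0] at h6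
        have h7 : Matrix.vecMulVec u (0 : Fin d → F) = 0 := by
          ext i k; simp [Matrix.vecMulVec_apply]
        rw [h7, add_zero] at h6
        exact h6
      have h8 : A.rank ≤ 1 := h5 ▸ rank_vmv_le (b - u) v
      omega
    have hbne : b ≠ 0 := by
      intro h0
      have h5 : A = Matrix.vecMulVec u a := by
        rw [hA2, h0]
        have h7 : Matrix.vecMulVec (0 : Fin e → F) v = 0 := by
          ext i k; simp [Matrix.vecMulVec_apply]
        rw [h7, add_zero]
      have h8 : A.rank ≤ 1 := h5 ▸ rank_vmv_le u a
      omega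
    refine ⟨Matrix.vecMulVec u (a + v), rank_vmv_one hu hav, ?_, ?_⟩
    · rw [hAC, rank_vmv_one hbu hv]; omega
    · rw [hBC, rank_vmv_one hbne hv]; omega

end Aux

/-- In the bilinear forms graph on `e × d` matrices over a finite field
(`e ≥ d ≥ 2`), if `y₁, y₂` are adjacent vertices both at distance `j ≥ 2` from `x`, then
some neighbour of `x` is at distance `j - 1` from both `y₁` and `y₂`. -/
theorem bil_common_descent (F : Type) [Field F] [Fintype F]
    (e d : ℕ) (hd : 2 ≤ d) (hde : d ≤ e)
    (x y₁ y₂ : Matrix (Fin e) (Fin d) F) (j : ℕ) (hj : 2 ≤ j)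
    (hy₁ : (bilGraph F e d).dist x y₁ = j) (hy₂ : (bilGraph F e d).dist x y₂ = j)
    (hadj : (bilGraph F e d).Adj y₁ y₂) :
    ∃ w : Matrix (Fin e) (Fin d) F, (bilGraph F e d).Adj x w ∧
      (bilGraph F e d).dist y₁ w = j - 1 ∧ (bilGraph F e d).dist y₂ w = j - 1 := by
  have hA : (y₁ - x).rank = j := by
    have h1 := dist_eq_rank x y₁
    rw [hy₁] at h1
    have h2 : y₁ - x = -(x - y₁) := by abel
    rw [h2, rank_neg', ← h1]
  have hB : (y₂ - x).rank = j := by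
    have h1 := dist_eq_rank x y₂
    rw [hy₂] at h1
    have h2 : y₂ - x = -(x - y₂) := by abel
    rw [h2, rank_neg', ← h1]
  have hR : ((y₂ - x) - (y₁ - x)).rank = 1 := by
    have h2 : (y₂ - x) - (y₁ - x) = -(y₁ - y₂) := by abel
    rw [h2, rank_neg']
    exact hadj.2
  obtain ⟨C, hC1, hAC, hBC⟩ := key (y₁ - x) (y₂ - x) j hj hA hB hR
  refine ⟨x + C, ⟨?_, ?_⟩, ?_, ?_⟩
  · intro h0
    have hC0 : C = 0 := left_eq_add.mp h0
    rw [hC0, Matrix.rank_zero] at hC1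
    omega
  · have h2 : x - (x + C) = -C := by abel
    rw [h2, rank_neg']
    exact hC1
  · rw [dist_eq_rank]
    have h2 : y₁ - (x + C) = (y₁ - x) - C := by abel
    rw [h2, hAC]
  · rw [dist_eq_rank]
    have h2 : y₂ - (x + C) = (y₂ - x) - C := by abel
    rw [h2, hBC]
end

section
/- Let F be a finite field with q elements and let e ≥ 2 be an integer. Then the bilinear forms graph Bil_q(e×2) is a strongly regular graph with parameters (v, k, λ, μ) = (q^{2e}, (q^e−1)(q+1), q^e−2+q(q−1), q(q+1)); that is, it has q^{2e} vertices, every vertex has (q^e−1)(q+1) neighbours, any two adjacent vertices have exactly q^e−2+q(q−1) common neighbours, and any two distinct non-adjacent vertices have exactly q(q+1) common neighbours. -/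
open SimpleGraph

namespace BilHelp

open Matrix Set


variable {F : Type} [Field F]

lemma exists_ne_zero {n : Type*} {u : n → F} (hu : u ≠ 0) : ∃ i, u i ≠ 0 := by
  by_contra h
  push_neg at h
  exact hu (funext fun i => h i)

lemma vec2_zero_iff {v : Fin 2 → F} : v = 0 ↔ v 0 = 0 ∧ v 1 = 0 := by
  constructor
  · rintro rfl; exact ⟨rfl, rfl⟩
  · rintro ⟨h0, h1⟩; funext j; fin_cases j <;> assumption

lemma vmv_left_cancel {m : Type*} {u : m → F} (hu : u ≠ 0) {v v' : Fin 2 → F}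
    (h : vecMulVec u v = vecMulVec u v') : v = v' := by
  obtain ⟨i, hi⟩ := exists_ne_zero hu
  funext j
  have h2 := congrFun (congrFun h i) j
  rw [vecMulVec_apply, vecMulVec_apply] at h2
  exact mul_left_cancel₀ hi h2

lemma vmv_right_cancel {m : Type*} {v : Fin 2 → F} (hv : v ≠ 0) {u u' : m → F}
    (h : vecMulVec u v = vecMulVec u' v) : u = u' := by
  obtain ⟨j, hj⟩ := exists_ne_zero hv
  funext i
  have h2 := congrFun (congrFun h i) j
  rw [vecMulVec_apply, vecMulVec_apply] at h2
  exact mul_right_cancel₀ hj h2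

lemma vmv_smul {m : Type*} (u : m → F) (c : F) (v : Fin 2 → F) :
    vecMulVec u (c • v) = vecMulVec (c • u) v := by
  ext i j
  simp only [vecMulVec_apply, Pi.smul_apply, smul_eq_mul]
  ring

lemma vmv_ne_zero {m : Type*} {u : m → F} {v : Fin 2 → F} (hu : u ≠ 0) (hv : v ≠ 0) :
    vecMulVec u v ≠ 0 := by
  obtain ⟨i, hi⟩ := exists_ne_zero hu
  obtain ⟨j, hj⟩ := exists_ne_zero hv
  intro h
  have h2 := congrFun (congrFun h i) j
  rw [vecMulVec_apply] at h2
  exact (mul_ne_zero hi hj) h2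

lemma rep_of_dep {m : Type*} {A : Matrix m (Fin 2) F} (hA : A ≠ 0) {s t : F}
    (hst : ¬(s = 0 ∧ t = 0)) (h : ∀ i, s * A i 0 + t * A i 1 = 0) :
    ∃ u v, u ≠ 0 ∧ v ≠ 0 ∧ A = vecMulVec u v := by
  by_cases ht : t = 0
  · have hs : s ≠ 0 := fun h0 => hst ⟨h0, ht⟩
    have hc0 : ∀ i, A i 0 = 0 := by
      intro i
      have h2 := h i
      rw [ht, zero_mul, add_zero] at h2
      exact (mul_eq_zero.mp h2).resolve_left hs
    refine ⟨fun i => A i 1, ![0, 1], ?_, ?_, ?_⟩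
    · intro hz
      apply hA
      ext i j
      fin_cases j
      · exact hc0 i
      · exact congrFun hz i
    · intro hz
      have := congrFun hz 1
      simp at this
    · ext i j
      fin_cases j <;> simp [vecMulVec_apply, hc0 i]
  · have hc1 : ∀ i, A i 1 = -s / t * A i 0 := by
      intro i
      rw [div_mul_eq_mul_div, eq_div_iff ht]
      linear_combination h i
    refine ⟨fun i => A i 0, ![1, -s / t], ?_, ?_, ?_⟩
    · intro hz
      apply hA
      ext i j
      have h0 : A i 0 = 0 := congrFun hz i
      fin_cases j
      · exact h0
      · have h1 := hc1 i
        rw [h0, mul_zero] at h1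
        simpa using h1
    · intro hz
      have := congrFun hz 0
      simp at this
    · ext i j
      fin_cases j
      · simp [vecMulVec_apply]
      · simp [vecMulVec_apply, hc1 i]
        ring

lemma rank_one_iff {m : Type*} [Fintype m] (A : Matrix m (Fin 2) F) :
    A.rank = 1 ↔ ∃ u v, u ≠ 0 ∧ v ≠ 0 ∧ A = vecMulVec u v := by
  constructor
  · intro hr
    have hA : A ≠ 0 := by
      rintro rfl
      rw [Matrix.rank_zero] at hr
      exact one_ne_zero hr.symm
    by_cases hdep : ∃ s t : F, ¬(s = 0 ∧ t = 0) ∧ ∀ i, s * A i 0 + t * A i 1 = 0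
    · obtain ⟨s, t, hst, h⟩ := hdep
      exact rep_of_dep hA hst h
    · exfalso
      push_neg at hdep
      have hli : LinearIndependent F ![fun i => A i 0, fun i => A i 1] := by
        rw [LinearIndependent.pair_iff]
        intro s t hst0
        by_contra hc
        obtain ⟨i, hi⟩ := hdep s t (fun hs0 ht0 => hc ⟨hs0, ht0⟩)
        apply hi
        simpa using congrFun hst0 i
      have h2 : A.rank = 2 := by
        have hAt : A.col = ![fun i => A i 0, fun i => A i 1] := by
          funext j i
          fin_cases j <;> rfl
        rw [Matrix.rank_eq_finrank_span_cols, hAt, finrank_span_eq_card hli,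
          Fintype.card_fin]
      omega
  · rintro ⟨u, v, hu, hv, rfl⟩
    have key : ∀ x : Fin 2 → F, (vecMulVec u v).mulVecLin x = (v ⬝ᵥ x) • u := by
      intro x
      funext i
      simp only [Matrix.mulVecLin_apply, Matrix.mulVec, dotProduct,
        vecMulVec_apply, Pi.smul_apply, smul_eq_mul, Fin.sum_univ_two]
      ring
    have hrange : LinearMap.range (vecMulVec u v).mulVecLin = Submodule.span F {u} := by
      apply le_antisymm
      · rintro y ⟨x, rfl⟩
        rw [Submodule.mem_span_singleton]
        exact ⟨v ⬝ᵥ x, (key x).symm⟩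
      · rw [Submodule.span_le, Set.singleton_subset_iff]
        obtain ⟨j, hj⟩ := exists_ne_zero hv
        refine ⟨(v j)⁻¹ • (Pi.single j 1 : Fin 2 → F), ?_⟩
        rw [key]
        have : v ⬝ᵥ (v j)⁻¹ • (Pi.single j 1 : Fin 2 → F) = 1 := by
          rw [dotProduct_smul, dotProduct_single, mul_one, smul_eq_mul,
            inv_mul_cancel₀ hj]
        rw [this, one_smul]
    show Matrix.rank _ = 1
    unfold Matrix.rank
    rw [hrange, finrank_span_singleton hu]

lemma rank_neg {m n : Type*} [Fintype n] [DecidableEq n] (A : Matrix m n F) :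
    (-A).rank = A.rank := by
  have hml : (-A).mulVecLin = -A.mulVecLin := by
    ext v
    simp [Matrix.neg_mulVec]
  unfold Matrix.rank
  rw [hml, LinearMap.range_neg]


lemma eq_smul_of_coords {v'' v : Fin 2 → F} {c : F} (e0 : v'' 0 = c * v 0)
    (e1 : v'' 1 = c * v 1) : v'' = c • v := by
  funext j
  fin_cases j
  · simpa using e0
  · simpa using e1

lemma ncard_setProd {α β : Type*} (s : Set α) (t : Set β) :
    (s ×ˢ t).ncard = s.ncard * t.ncard := by
  rw [← Nat.card_coe_set_eq, ← Nat.card_coe_set_eq, ← Nat.card_coe_set_eq, ← Nat.card_prod]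
  exact Nat.card_congr (Equiv.Set.prod s t)

lemma ncard_compl' {α : Type*} [Fintype α] (s : Set α) :
    sᶜ.ncard = Fintype.card α - s.ncard := by
  have h := Set.ncard_union_eq (disjoint_compl_right : Disjoint s sᶜ) (Set.toFinite s)
    (Set.toFinite sᶜ)
  rw [Set.union_compl_self, Set.ncard_univ, Nat.card_eq_fintype_card] at h
  omega

lemma ncard_ne {α : Type*} [Fintype α] (a : α) :
    {x : α | x ≠ a}.ncard = Fintype.card α - 1 := by
  have h : {x : α | x ≠ a} = ({a} : Set α)ᶜ := by ext x; simp
  rw [h, ncard_compl', Set.ncard_singleton]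

lemma ncard_ne_two {α : Type*} [Fintype α] {a b : α} (h : a ≠ b) :
    {x : α | x ≠ a ∧ x ≠ b}.ncard = Fintype.card α - 2 := by
  have h2 : {x : α | x ≠ a ∧ x ≠ b} = ({a, b} : Set α)ᶜ := by ext x; simp [not_or]
  rw [h2, ncard_compl', Set.ncard_pair h]

lemma card_smul_set {m : Type*} [Fintype F] {u : m → F} (hu : u ≠ 0) :
    {w : m → F | ∃ c : F, w = c • u}.ncard = Fintype.card F := by
  have h1 : {w : m → F | ∃ c : F, w = c • u} = (fun c : F => c • u) '' Set.univ := by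
    ext w; simp [eq_comm]
  rw [h1, Set.ncard_image_of_injOn, Set.ncard_univ, Nat.card_eq_fintype_card]
  intro c _ c' _ h
  obtain ⟨i, hi⟩ := exists_ne_zero hu
  have h2 := congrFun h i
  simp only [Pi.smul_apply, smul_eq_mul] at h2
  exact mul_right_cancel₀ hi h2

lemma card_not_smul {m : Type*} [Fintype m] [DecidableEq m] [Fintype F] {u : m → F} (hu : u ≠ 0) :
    {w : m → F | ¬∃ c : F, w = c • u}.ncard
      = Fintype.card (m → F) - Fintype.card F := by
  have h1 : {w : m → F | ¬∃ c : F, w = c • u} = {w : m → F | ∃ c : F, w = c • u}ᶜ := rfl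
  rw [h1, ncard_compl', card_smul_set hu]

lemma smul_eq_smul_indep {m : Type*} {u w : m → F} (hu : u ≠ 0)
    (hw : ¬∃ c : F, w = c • u) {a b : F} (h : ∀ i, a * u i = b * w i) :
    a = 0 ∧ b = 0 := by
  by_cases hb : b = 0
  · subst hb
    obtain ⟨i, hi⟩ := exists_ne_zero hu
    have h2 := h i
    rw [zero_mul] at h2
    refine ⟨(mul_eq_zero.mp h2).resolve_right hi, rfl⟩
  · exfalso
    apply hw
    refine ⟨b⁻¹ * a, ?_⟩
    funext i
    simp only [Pi.smul_apply, smul_eq_mul]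
    field_simp
    linear_combination -h i

lemma cross_of_system {s t a0 a1 b0 b1 : F} (hst : ¬(s = 0 ∧ t = 0))
    (h1 : s * a0 + t * a1 = 0) (h2 : s * b0 + t * b1 = 0) :
    a0 * b1 = a1 * b0 := by
  by_cases hs : s = 0
  · have ht : t ≠ 0 := fun h => hst ⟨hs, h⟩
    subst hs
    rw [zero_mul, zero_add] at h1 h2
    have ha1 : a1 = 0 := (mul_eq_zero.mp h1).resolve_left ht
    have hb1 : b1 = 0 := (mul_eq_zero.mp h2).resolve_left ht
    rw [ha1, hb1]
    ring
  · apply mul_left_cancel₀ hs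
    linear_combination b1 * h1 - a1 * h2

lemma prop_of_cross {v v'' : Fin 2 → F} (hv : v ≠ 0) (hv'' : v'' ≠ 0)
    (h : v 0 * v'' 1 = v 1 * v'' 0) : ∃ c : F, c ≠ 0 ∧ v'' = c • v := by
  by_cases h0 : v 0 = 0
  · have h1 : v 1 ≠ 0 := fun h1 => hv (vec2_zero_iff.mpr ⟨h0, h1⟩)
    have hv''0 : v'' 0 = 0 := by
      rw [h0, zero_mul] at h
      exact (mul_eq_zero.mp h.symm).resolve_left h1
    refine ⟨v'' 1 / v 1, ?_, ?_⟩
    · intro hc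
      rw [div_eq_zero_iff] at hc
      rcases hc with hc | hc
      · exact hv'' (vec2_zero_iff.mpr ⟨hv''0, hc⟩)
      · exact h1 hc
    · apply eq_smul_of_coords
      · rw [h0, mul_zero, hv''0]
      · rw [div_mul_cancel₀ _ h1]
  · refine ⟨v'' 0 / v 0, ?_, ?_⟩
    · intro hc
      rw [div_eq_zero_iff] at hc
      have hv''0 : v'' 0 = 0 := hc.resolve_right h0
      have hv''1 : v'' 1 = 0 := by
        rw [hv''0, mul_zero] at h
        exact (mul_eq_zero.mp h).resolve_left h0
      exact hv'' (vec2_zero_iff.mpr ⟨hv''0, hv''1⟩)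
    · apply eq_smul_of_coords
      · rw [div_mul_cancel₀ _ h0]
      · rw [div_mul_eq_mul_div, eq_div_iff h0]
        linear_combination h

lemma rank2_eq_one_iff (N : Matrix (Fin 2) (Fin 2) F) :
    N.rank = 1 ↔ N ≠ 0 ∧ N.det = 0 := by
  constructor
  · intro h
    obtain ⟨u, v, hu, hv, rfl⟩ := (rank_one_iff _).mp h
    refine ⟨vmv_ne_zero hu hv, ?_⟩
    rw [Matrix.det_fin_two]
    simp only [vecMulVec_apply]
    ring
  · rintro ⟨hN, hdet⟩
    obtain ⟨x, hx, hx0⟩ := Matrix.exists_mulVec_eq_zero_iff.mpr hdet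
    have hrel : ∀ i, x 0 * N i 0 + x 1 * N i 1 = 0 := by
      intro i
      have h2 := congrFun hx0 i
      simp only [Matrix.mulVec, dotProduct, Fin.sum_univ_two, Pi.zero_apply] at h2
      linear_combination h2
    have hst : ¬(x 0 = 0 ∧ x 1 = 0) := fun hc => hx (vec2_zero_iff.mpr hc)
    obtain ⟨u, v, hu, hv, hrep⟩ := rep_of_dep hN hst hrel
    exact (rank_one_iff _).mpr ⟨u, v, hu, hv, hrep⟩

lemma det_one_sub (N : Matrix (Fin 2) (Fin 2) F) :
    (1 - N).det = 1 - (N 0 0 + N 1 1) + N.det := by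
  rw [Matrix.det_fin_two, Matrix.det_fin_two]
  simp only [Matrix.sub_apply, Matrix.one_apply_eq, Matrix.one_apply_ne
    (show (0 : Fin 2) ≠ 1 by decide), Matrix.one_apply_ne (show (1 : Fin 2) ≠ 0 by decide)]
  ring

lemma rank_cond_iff (N : Matrix (Fin 2) (Fin 2) F) :
    (N.rank = 1 ∧ (1 - N).rank = 1) ↔ (N.det = 0 ∧ N 0 0 + N 1 1 = 1) := by
  rw [rank2_eq_one_iff, rank2_eq_one_iff]
  constructor
  · rintro ⟨⟨hN, hdet⟩, ⟨hN1, hdet1⟩⟩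
    refine ⟨hdet, ?_⟩
    rw [det_one_sub, hdet] at hdet1
    linear_combination -hdet1
  · rintro ⟨hdet, htr⟩
    have hN : N ≠ 0 := by
      intro h
      rw [h] at htr
      simp only [Matrix.zero_apply, add_zero] at htr
      exact one_ne_zero htr.symm
    have hN1 : (1 : Matrix (Fin 2) (Fin 2) F) - N ≠ 0 := by
      intro h
      have h2 : N = 1 := (sub_eq_zero.mp h).symm
      rw [h2, Matrix.det_one] at hdet
      exact one_ne_zero hdet
    refine ⟨⟨hN, hdet⟩, hN1, ?_⟩
    rw [det_one_sub, hdet, htr]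
    ring

lemma mul_vmv {e : ℕ} (D : Matrix (Fin e) (Fin 2) F) (a b : Fin 2 → F) :
    D * vecMulVec a b = vecMulVec (fun i => D i 0 * a 0 + D i 1 * a 1) b := by
  ext i j
  simp only [Matrix.mul_apply, vecMulVec_apply, Fin.sum_univ_two]
  ring

lemma mul_left_injective_of_indep {e : ℕ} {D : Matrix (Fin e) (Fin 2) F}
    (hD : ∀ s t : F, (∀ i, s * D i 0 + t * D i 1 = 0) → s = 0 ∧ t = 0) :
    Function.Injective (fun N : Matrix (Fin 2) (Fin 2) F => D * N) := by
  intro N N' h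
  simp only at h
  have key : ∀ j : Fin 2, N 0 j = N' 0 j ∧ N 1 j = N' 1 j := by
    intro j
    have h2 := hD (N 0 j - N' 0 j) (N 1 j - N' 1 j) ?_
    · exact ⟨sub_eq_zero.mp h2.1, sub_eq_zero.mp h2.2⟩
    · intro i
      have h3 := congrFun (congrFun h i) j
      simp only [Matrix.mul_apply, Fin.sum_univ_two] at h3
      linear_combination h3
  ext i j
  fin_cases i
  · exact (key j).1
  · exact (key j).2

lemma card_rank_one [Fintype F] (e : ℕ) :
    {C : Matrix (Fin e) (Fin 2) F | C.rank = 1}.ncard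
      = (Fintype.card F ^ e - 1) * (Fintype.card F + 1) := by
  classical
  set Sa : Set (Matrix (Fin e) (Fin 2) F) :=
    (fun p : (Fin e → F) × F => vecMulVec p.1 ![1, p.2]) ''
      ({w : Fin e → F | w ≠ 0} ×ˢ (Set.univ : Set F)) with hSa
  set Sb : Set (Matrix (Fin e) (Fin 2) F) :=
    (fun w : Fin e → F => vecMulVec w ![0, 1]) '' {w : Fin e → F | w ≠ 0} with hSb
  have hv1 : ∀ t : F, (![1, t] : Fin 2 → F) ≠ 0 := by
    intro t hz
    have h2 := congrFun hz 0
    simp at h2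
  have hv2 : (![0, 1] : Fin 2 → F) ≠ 0 := by
    intro hz
    have h2 := congrFun hz 1
    simp at h2
  have hunion : {C : Matrix (Fin e) (Fin 2) F | C.rank = 1} = Sa ∪ Sb := by
    ext C
    simp only [Set.mem_setOf_eq, Set.mem_union, hSa, hSb, Set.mem_image, Set.mem_prod,
      Set.mem_setOf_eq, Set.mem_univ, and_true, Prod.exists]
    constructor
    · intro h
      obtain ⟨u, v, hu, hv, rfl⟩ := (rank_one_iff _).mp h
      by_cases h0 : v 0 = 0
      · right
        have h1 : v 1 ≠ 0 := fun h1 => hv (vec2_zero_iff.mpr ⟨h0, h1⟩)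
        refine ⟨v 1 • u, smul_ne_zero h1 hu, ?_⟩
        ext i j
        fin_cases j
        · simp [vecMulVec_apply, h0]
        · simp [vecMulVec_apply]
          ring
      · left
        refine ⟨v 0 • u, v 1 / v 0, smul_ne_zero h0 hu, ?_⟩
        ext i j
        fin_cases j
        · simp [vecMulVec_apply]
          ring
        · simp [vecMulVec_apply]
          field_simp
    · rintro (⟨w, t, hw, rfl⟩ | ⟨w, hw, rfl⟩)
      · exact (rank_one_iff _).mpr ⟨w, ![1, t], hw, hv1 t, rfl⟩
      · exact (rank_one_iff _).mpr ⟨w, ![0, 1], hw, hv2, rfl⟩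
  have hdisj : Disjoint Sa Sb := by
    rw [Set.disjoint_left]
    rintro C ⟨⟨w, t⟩, ⟨hw, -⟩, rfl⟩ ⟨w', hw', hC⟩
    obtain ⟨i, hi⟩ := exists_ne_zero hw
    have h2 := congrFun (congrFun hC i) 0
    simp only [vecMulVec_apply] at h2
    simp at h2
    exact hi h2.symm
  have hia : Sa.ncard = (Fintype.card F ^ e - 1) * Fintype.card F := by
    rw [hSa, Set.ncard_image_of_injOn, ncard_setProd, ncard_ne, Set.ncard_univ,
      Nat.card_eq_fintype_card, Fintype.card_fun, Fintype.card_fin]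
    rintro ⟨w, t⟩ hp ⟨w', t'⟩ hp' h
    simp only [Set.mem_prod, Set.mem_setOf_eq] at hp hp'
    have hww : w = w' := by
      funext i
      have h2 := congrFun (congrFun h i) 0
      simpa [vecMulVec_apply] using h2
    subst hww
    obtain ⟨i, hi⟩ := exists_ne_zero hp.1
    have h2 := congrFun (congrFun h i) 1
    simp only [vecMulVec_apply, Matrix.cons_val_one, Matrix.head_cons] at h2
    have htt : t = t' := mul_left_cancel₀ hi h2
    rw [htt]
  have hib : Sb.ncard = Fintype.card F ^ e - 1 := by
    rw [hSb, Set.ncard_image_of_injOn, ncard_ne, Fintype.card_fun, Fintype.card_fin]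
    intro w hw w' hw' h
    funext i
    have h2 := congrFun (congrFun h i) 1
    simpa [vecMulVec_apply] using h2
  rw [hunion, Set.ncard_union_eq hdisj (Set.toFinite _) (Set.toFinite _), hia, hib]
  generalize Fintype.card F ^ e - 1 = a
  ring

lemma card_lambda [Fintype F] {e : ℕ} {u : Fin e → F} {v : Fin 2 → F}
    (hu : u ≠ 0) (hv : v ≠ 0) :
    {C : Matrix (Fin e) (Fin 2) F | C.rank = 1 ∧ (vecMulVec u v - C).rank = 1}.ncard
      = (Fintype.card F ^ 2 - 2) + (Fintype.card F ^ e - Fintype.card F) := by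
  classical
  set SL : Set (Matrix (Fin e) (Fin 2) F) :=
    (fun v' : Fin 2 → F => vecMulVec u v') '' {v' : Fin 2 → F | v' ≠ 0 ∧ v' ≠ v} with hSL
  set SO : Set (Matrix (Fin e) (Fin 2) F) :=
    (fun w : Fin e → F => vecMulVec w v) '' {w : Fin e → F | ¬∃ c : F, w = c • u} with hSO
  have hunion : {C : Matrix (Fin e) (Fin 2) F | C.rank = 1 ∧ (vecMulVec u v - C).rank = 1}
      = SL ∪ SO := by
    ext C
    simp only [Set.mem_setOf_eq, Set.mem_union, hSL, hSO, Set.mem_image, Set.mem_setOf_eq]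
    constructor
    · rintro ⟨hC, hDC⟩
      obtain ⟨w'', v'', hw'', hv'', rfl⟩ := (rank_one_iff _).mp hC
      by_cases hspan : ∃ c : F, w'' = c • u
      · left
        obtain ⟨c, rfl⟩ := hspan
        have hc : c ≠ 0 := by
          rintro rfl
          rw [zero_smul] at hw''
          exact hw'' rfl
        have hCeq : vecMulVec (c • u) v'' = vecMulVec u (c • v'') := (vmv_smul u c v'').symm
        refine ⟨c • v'', ⟨smul_ne_zero hc hv'', ?_⟩, hCeq.symm⟩
        intro hvv
        have hDD : vecMulVec (c • u) v'' = vecMulVec u v := by rw [hCeq, hvv]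
        rw [hDD, sub_self, Matrix.rank_zero] at hDC
        exact one_ne_zero hDC.symm
      · right
        obtain ⟨u2, v2, hu2, hv2, hrep2⟩ := (rank_one_iff _).mp hDC
        have hent : ∀ i j, u i * v j - w'' i * v'' j = u2 i * v2 j := by
          intro i j
          have h2 := congrFun (congrFun hrep2 i) j
          simpa [Matrix.sub_apply, vecMulVec_apply] using h2
        have hexp : ∀ i, (v2 1 * v 0 - v2 0 * v 1) * u i
            = (v2 1 * v'' 0 - v2 0 * v'' 1) * w'' i := by
          intro i
          linear_combination v2 1 * hent i 0 - v2 0 * hent i 1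
        obtain ⟨hA, hB⟩ := smul_eq_smul_indep hu hspan hexp
        have hst2 : ¬(v2 1 = 0 ∧ -(v2 0) = 0) := by
          rintro ⟨h1, h2⟩
          exact hv2 (vec2_zero_iff.mpr ⟨neg_eq_zero.mp h2, h1⟩)
        have hcross : v 0 * v'' 1 = v 1 * v'' 0 := by
          apply cross_of_system hst2
          · linear_combination hA
          · linear_combination hB
        obtain ⟨c, hc, hv''c⟩ := prop_of_cross hv hv'' hcross
        refine ⟨c • w'', ?_, ?_⟩
        · rintro ⟨d, hd⟩
          apply hspan
          refine ⟨c⁻¹ * d, ?_⟩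
          calc w'' = c⁻¹ • (c • w'') := by rw [smul_smul, inv_mul_cancel₀ hc, one_smul]
          _ = c⁻¹ • (d • u) := by rw [hd]
          _ = (c⁻¹ * d) • u := by rw [smul_smul]
        · rw [hv''c, vmv_smul]
    · rintro (⟨v', ⟨hv'0, hv'v⟩, rfl⟩ | ⟨w, hw, rfl⟩)
      · constructor
        · exact (rank_one_iff _).mpr ⟨u, v', hu, hv'0, rfl⟩
        · have hsub : vecMulVec u v - vecMulVec u v' = vecMulVec u (v - v') := by
            ext i j
            simp only [Matrix.sub_apply, vecMulVec_apply, Pi.sub_apply]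
            ring
          rw [hsub]
          exact (rank_one_iff _).mpr ⟨u, v - v', hu, sub_ne_zero.mpr (Ne.symm hv'v), rfl⟩
      · have hw0 : w ≠ 0 := by
          rintro rfl
          exact hw ⟨0, by rw [zero_smul]⟩
        constructor
        · exact (rank_one_iff _).mpr ⟨w, v, hw0, hv, rfl⟩
        · have hsub : vecMulVec u v - vecMulVec w v = vecMulVec (u - w) v := by
            ext i j
            simp only [Matrix.sub_apply, vecMulVec_apply, Pi.sub_apply]
            ring
          have huw : u - w ≠ 0 := by
            intro h2
            apply hw
            refine ⟨1, ?_⟩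
            rw [one_smul]
            exact (sub_eq_zero.mp h2).symm
          rw [hsub]
          exact (rank_one_iff _).mpr ⟨u - w, v, huw, hv, rfl⟩
  have hdisj : Disjoint SL SO := by
    rw [Set.disjoint_left]
    rintro C ⟨v', hv', rfl⟩ ⟨w, hw, hC⟩
    obtain ⟨j, hj⟩ := exists_ne_zero hv
    apply hw
    refine ⟨(v j)⁻¹ * v' j, ?_⟩
    funext i
    have h2 := congrFun (congrFun hC i) j
    simp only [vecMulVec_apply] at h2
    simp only [Pi.smul_apply, smul_eq_mul]
    field_simp
    linear_combination h2
  have hiL : SL.ncard = Fintype.card F ^ 2 - 2 := by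
    rw [hSL, Set.ncard_image_of_injOn, ncard_ne_two (Ne.symm hv), Fintype.card_fun,
      Fintype.card_fin]
    intro a ha b hb h
    exact vmv_left_cancel hu h
  have hiO : SO.ncard = Fintype.card F ^ e - Fintype.card F := by
    rw [hSO, Set.ncard_image_of_injOn, card_not_smul hu, Fintype.card_fun, Fintype.card_fin]
    intro a ha b hb h
    exact vmv_right_cancel hv h
  rw [hunion, Set.ncard_union_eq hdisj (Set.toFinite _) (Set.toFinite _), hiL, hiO]

lemma rank_mul_vmv_one {e : ℕ} {D : Matrix (Fin e) (Fin 2) F}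
    (hD : ∀ s t : F, (∀ i, s * D i 0 + t * D i 1 = 0) → s = 0 ∧ t = 0)
    {a b : Fin 2 → F} (ha : a ≠ 0) (hb : b ≠ 0) :
    (D * vecMulVec a b).rank = 1 := by
  rw [mul_vmv]
  apply (rank_one_iff _).mpr
  refine ⟨_, b, ?_, hb, rfl⟩
  intro hz
  apply ha
  apply vec2_zero_iff.mpr
  apply hD
  intro i
  have h3 := congrFun hz i
  simp only [Pi.zero_apply] at h3
  linear_combination h3

lemma recon {e : ℕ} {D C : Matrix (Fin e) (Fin 2) F}
    (hD : ∀ s t : F, (∀ i, s * D i 0 + t * D i 1 = 0) → s = 0 ∧ t = 0)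
    (hC : C.rank = 1) (hDC : (D - C).rank = 1) :
    ∃ N : Matrix (Fin 2) (Fin 2) F, C = D * N ∧ N.rank = 1 := by
  obtain ⟨w, b, hw, hb, rfl⟩ := (rank_one_iff _).mp hC
  obtain ⟨u2, v2, hu2, hv2, hrep2⟩ := (rank_one_iff _).mp hDC
  have hent : ∀ i j, D i j - w i * b j = u2 i * v2 j := by
    intro i j
    have h2 := congrFun (congrFun hrep2 i) j
    simpa [Matrix.sub_apply, vecMulVec_apply] using h2
  have hst : ¬(v2 1 = 0 ∧ -(v2 0) = 0) := by
    rintro ⟨h1, h2⟩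
    exact hv2 (vec2_zero_iff.mpr ⟨neg_eq_zero.mp h2, h1⟩)
  have hkey : ∀ i, v2 1 * D i 0 + -(v2 0) * D i 1
      = (v2 1 * b 0 + -(v2 0) * b 1) * w i := by
    intro i
    linear_combination v2 1 * hent i 0 - v2 0 * hent i 1
  set k := v2 1 * b 0 + -(v2 0) * b 1 with hk
  have hk0 : k ≠ 0 := by
    intro h0
    exact hst (hD _ _ (fun i => by rw [hkey i, h0, zero_mul]))
  have hane : (![k⁻¹ * v2 1, k⁻¹ * -(v2 0)] : Fin 2 → F) ≠ 0 := by
    intro hz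
    apply hst
    constructor
    · have h2 := congrFun hz 0
      simp only [Matrix.cons_val_zero, Pi.zero_apply] at h2
      rcases mul_eq_zero.mp h2 with h3 | h3
      · exact absurd h3 (inv_ne_zero hk0)
      · exact h3
    · have h2 := congrFun hz 1
      simp only [Matrix.cons_val_one, Matrix.head_cons, Pi.zero_apply] at h2
      rcases mul_eq_zero.mp h2 with h3 | h3
      · exact absurd h3 (inv_ne_zero hk0)
      · exact h3
  refine ⟨vecMulVec ![k⁻¹ * v2 1, k⁻¹ * -(v2 0)] b, ?_, ?_⟩
  · rw [mul_vmv]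
    have heq : (fun i => D i 0 * (![k⁻¹ * v2 1, k⁻¹ * -(v2 0)] : Fin 2 → F) 0
        + D i 1 * (![k⁻¹ * v2 1, k⁻¹ * -(v2 0)] : Fin 2 → F) 1) = w := by
      funext i
      simp only [Matrix.cons_val_zero, Matrix.cons_val_one, Matrix.head_cons]
      have h2 := hkey i
      field_simp
      linear_combination h2
    rw [heq]
  · exact (rank_one_iff _).mpr ⟨_, b, hane, hb, rfl⟩

lemma card_mu [Fintype F] {e : ℕ} {D : Matrix (Fin e) (Fin 2) F}
    (hD : ∀ s t : F, (∀ i, s * D i 0 + t * D i 1 = 0) → s = 0 ∧ t = 0) :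
    {C : Matrix (Fin e) (Fin 2) F | C.rank = 1 ∧ (D - C).rank = 1}.ncard
      = {N : Matrix (Fin 2) (Fin 2) F | N.rank = 1 ∧ (1 - N).rank = 1}.ncard := by
  have himg : {C : Matrix (Fin e) (Fin 2) F | C.rank = 1 ∧ (D - C).rank = 1}
      = (fun N => D * N) '' {N : Matrix (Fin 2) (Fin 2) F | N.rank = 1 ∧ (1 - N).rank = 1} := by
    ext C
    simp only [Set.mem_setOf_eq, Set.mem_image]
    constructor
    · rintro ⟨hC, hDC⟩
      obtain ⟨N1, hN1eq, hN1⟩ := recon hD hC hDC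
      have hC' : (D - (D - C)).rank = 1 := by rwa [sub_sub_cancel]
      obtain ⟨N2, hN2eq, hN2⟩ := recon hD hDC hC'
      have hsum : D * (N1 + N2) = D * (1 : Matrix (Fin 2) (Fin 2) F) := by
        rw [Matrix.mul_add, Matrix.mul_one, ← hN1eq, ← hN2eq]
        abel
      have h12 : N1 + N2 = 1 := mul_left_injective_of_indep hD hsum
      refine ⟨N1, ⟨hN1, ?_⟩, hN1eq.symm⟩
      have h2 : (1 : Matrix (Fin 2) (Fin 2) F) - N1 = N2 := by
        rw [← h12]
        abel
      rw [h2]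
      exact hN2
    · rintro ⟨N, ⟨hN, hN1⟩, rfl⟩
      constructor
      · obtain ⟨a, b, ha, hb, rfl⟩ := (rank_one_iff _).mp hN
        exact rank_mul_vmv_one hD ha hb
      · have h2 : D - D * N = D * (1 - N) := by rw [Matrix.mul_sub, Matrix.mul_one]
        rw [h2]
        obtain ⟨a, b, ha, hb, hrep⟩ := (rank_one_iff _).mp hN1
        rw [hrep]
        exact rank_mul_vmv_one hD ha hb
  rw [himg, Set.ncard_image_of_injective _ (mul_left_injective_of_indep hD)]

lemma card_bc0 [Fintype F] : {p : F × F | p.1 * p.2 = 0}.ncard = 2 * Fintype.card F - 1 := by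
  classical
  have h : {p : F × F | p.1 * p.2 = 0}
      = (({0} : Set F) ×ˢ (Set.univ : Set F)) ∪ ({b : F | b ≠ 0} ×ˢ ({0} : Set F)) := by
    ext ⟨b, c⟩
    simp only [Set.mem_setOf_eq, Set.mem_union, Set.mem_prod, Set.mem_singleton_iff,
      Set.mem_univ, and_true]
    constructor
    · intro h
      rcases mul_eq_zero.mp h with h | h
      · exact Or.inl h
      · by_cases hb : b = 0
        · exact Or.inl hb
        · exact Or.inr ⟨hb, h⟩
    · rintro (rfl | ⟨hb, rfl⟩)
      · rw [zero_mul]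
      · rw [mul_zero]
  have hdisj : Disjoint (({0} : Set F) ×ˢ (Set.univ : Set F))
      ({b : F | b ≠ 0} ×ˢ ({0} : Set F)) := by
    rw [Set.disjoint_left]
    rintro ⟨b, c⟩ hb hc
    simp only [Set.mem_prod, Set.mem_singleton_iff, Set.mem_setOf_eq] at hb hc
    exact hc.1 hb.1
  rw [h, Set.ncard_union_eq hdisj (Set.toFinite _) (Set.toFinite _), ncard_setProd,
    ncard_setProd, Set.ncard_singleton, Set.ncard_univ,
    Nat.card_eq_fintype_card, ncard_ne]
  have h1 : 1 ≤ Fintype.card F := Fintype.card_pos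
  omega

lemma card_T [Fintype F] :
    {N : Matrix (Fin 2) (Fin 2) F | N.rank = 1 ∧ (1 - N).rank = 1}.ncard
      = Fintype.card F * (Fintype.card F + 1) := by
  classical
  have h1 : {N : Matrix (Fin 2) (Fin 2) F | N.rank = 1 ∧ (1 - N).rank = 1}
      = {N : Matrix (Fin 2) (Fin 2) F | N.det = 0 ∧ N 0 0 + N 1 1 = 1} := by
    ext N
    exact rank_cond_iff N
  have h2 : {N : Matrix (Fin 2) (Fin 2) F | N.det = 0 ∧ N 0 0 + N 1 1 = 1}
      = (fun p : F × F × F => !![p.1, p.2.1; p.2.2, 1 - p.1]) ''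
        {p : F × F × F | p.1 * (1 - p.1) = p.2.1 * p.2.2} := by
    ext N
    simp only [Set.mem_setOf_eq, Set.mem_image]
    constructor
    · rintro ⟨hdet, htr⟩
      rw [Matrix.det_fin_two] at hdet
      refine ⟨(N 0 0, N 0 1, N 1 0), ?_, ?_⟩
      · simp only [Set.mem_setOf_eq]
        linear_combination hdet - N 0 0 * htr
      · ext i j
        fin_cases i <;> fin_cases j
        · rfl
        · rfl
        · rfl
        · show (1 : F) - N 0 0 = N 1 1
          linear_combination -htr
    · rintro ⟨p, hp, rfl⟩
      replace hp : p.1 * (1 - p.1) = p.2.1 * p.2.2 := hp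
      constructor
      · rw [Matrix.det_fin_two]
        show p.1 * (1 - p.1) - p.2.1 * p.2.2 = 0
        linear_combination hp
      · show p.1 + (1 - p.1) = 1
        ring
  have hinj : Set.InjOn (fun p : F × F × F => !![p.1, p.2.1; p.2.2, 1 - p.1])
      {p : F × F × F | p.1 * (1 - p.1) = p.2.1 * p.2.2} := by
    rintro ⟨a, b, c⟩ - ⟨a', b', c'⟩ - h
    have e00 := congrFun (congrFun h 0) 0
    have e01 := congrFun (congrFun h 0) 1
    have e10 := congrFun (congrFun h 1) 0
    simp only [Matrix.cons_val', Matrix.cons_val_zero, Matrix.cons_val_one,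
      Matrix.head_cons, Matrix.empty_val', Matrix.cons_val_fin_one, Matrix.head_fin_const,
      Matrix.of_apply] at e00 e01 e10
    simp only [Prod.mk.injEq]
    exact ⟨e00, e01, e10⟩
  rw [h1, h2, Set.ncard_image_of_injOn hinj]
  set Sa : Set (F × F × F) := (({0, 1} : Set F) ×ˢ {bc : F × F | bc.1 * bc.2 = 0}) with hSa
  set Sb : Set (F × F × F) := (fun p : F × F => (p.1, p.2, p.2⁻¹ * (p.1 * (1 - p.1)))) ''
      (({a : F | a ≠ 0 ∧ a ≠ 1}) ×ˢ ({b : F | b ≠ 0})) with hSb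
  have hun : {p : F × F × F | p.1 * (1 - p.1) = p.2.1 * p.2.2} = Sa ∪ Sb := by
    ext ⟨a, b, c⟩
    simp only [Set.mem_setOf_eq, Set.mem_union, hSa, hSb, Set.mem_prod, Set.mem_insert_iff,
      Set.mem_singleton_iff, Set.mem_image, Set.mem_setOf_eq, Prod.exists]
    constructor
    · intro h
      by_cases ha : a = 0 ∨ a = 1
      · left
        refine ⟨ha, ?_⟩
        rcases ha with rfl | rfl
        · rw [← h]; ring
        · rw [← h]; ring
      · right
        push_neg at ha
        have hval : a * (1 - a) ≠ 0 :=
          mul_ne_zero ha.1 (sub_ne_zero.mpr (Ne.symm ha.2))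
        have hbne : b ≠ 0 := by
          rintro rfl
          rw [zero_mul] at h
          exact hval h
        refine ⟨a, b, ⟨⟨ha.1, ha.2⟩, hbne⟩, ?_⟩
        have hcc : b⁻¹ * (a * (1 - a)) = c := by rw [h, inv_mul_cancel_left₀ hbne]
        rw [hcc]
    · rintro (⟨ha, hbc⟩ | ⟨a', b', ⟨⟨ha0, ha1⟩, hb'⟩, heq⟩)
      · rcases ha with rfl | rfl
        · rw [hbc]; ring
        · rw [hbc]; ring
      · obtain ⟨rfl, rfl, rfl⟩ : a' = a ∧ b' = b ∧ b'⁻¹ * (a' * (1 - a')) = c := by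
          simpa [Prod.mk.injEq] using heq
        rw [mul_inv_cancel_left₀ hb']
  have hdisj : Disjoint Sa Sb := by
    rw [Set.disjoint_left]
    rintro ⟨a, b, c⟩ hmem hmem'
    simp only [hSa, Set.mem_prod, Set.mem_insert_iff, Set.mem_singleton_iff] at hmem
    simp only [hSb, Set.mem_image, Set.mem_prod, Set.mem_setOf_eq, Prod.exists] at hmem'
    obtain ⟨a', b', ⟨⟨ha0, ha1⟩, -⟩, heq⟩ := hmem'
    have haa : a' = a := congrArg Prod.fst heq
    subst haa
    rcases hmem.1 with rfl | rfl
    · exact ha0 rfl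
    · exact ha1 rfl
  have hca : Sa.ncard = 2 * (2 * Fintype.card F - 1) := by
    rw [hSa, ncard_setProd, Set.ncard_pair (zero_ne_one), card_bc0]
  have hcb : Sb.ncard = (Fintype.card F - 2) * (Fintype.card F - 1) := by
    rw [hSb, Set.ncard_image_of_injOn, ncard_setProd, ncard_ne_two (zero_ne_one), ncard_ne]
    rintro ⟨a, b⟩ - ⟨a', b'⟩ - h
    simp only [Prod.mk.injEq] at h ⊢
    exact ⟨h.1, h.2.1⟩
  rw [hun, Set.ncard_union_eq hdisj (Set.toFinite _) (Set.toFinite _), hca, hcb]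
  have hq2 : 2 ≤ Fintype.card F := Fintype.one_lt_card
  obtain ⟨r, hr⟩ : ∃ r, Fintype.card F = r + 2 := ⟨Fintype.card F - 2, by omega⟩
  rw [hr]
  have e1 : r + 2 - 1 = r + 1 := by omega
  have e2 : r + 2 - 2 = r := by omega
  have e3 : 2 * (r + 2) - 1 = 2 * r + 3 := by omega
  rw [e1, e2, e3]
  ring

lemma bil_adj {e d : ℕ} (A B : Matrix (Fin e) (Fin d) F) :
    (bilGraph F e d).Adj A B ↔ A ≠ B ∧ (A - B).rank = 1 := Iff.rfl

lemma rank_sub_comm {e d : ℕ} (A B : Matrix (Fin e) (Fin d) F) :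
    (A - B).rank = (B - A).rank := by
  rw [← neg_sub A B, rank_neg]

lemma neighbor_eq {e d : ℕ} (x : Matrix (Fin e) (Fin d) F) :
    {y | (bilGraph F e d).Adj x y}
      = (fun C => x - C) '' {C : Matrix (Fin e) (Fin d) F | C.rank = 1} := by
  ext y
  simp only [Set.mem_setOf_eq, Set.mem_image, bil_adj]
  constructor
  · rintro ⟨hne, hr⟩
    exact ⟨x - y, hr, by abel⟩
  · rintro ⟨C, hC, rfl⟩
    constructor
    · intro h
      have h0 : C = 0 := sub_eq_self.mp h.symm
      rw [h0, Matrix.rank_zero] at hC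
      exact one_ne_zero hC.symm
    · rw [sub_sub_cancel]
      exact hC

lemma common_eq {e d : ℕ} (x y : Matrix (Fin e) (Fin d) F) :
    {z | (bilGraph F e d).Adj x z ∧ (bilGraph F e d).Adj y z}
      = (fun C => x - C) ''
        {C : Matrix (Fin e) (Fin d) F | C.rank = 1 ∧ ((x - y) - C).rank = 1} := by
  ext z
  simp only [Set.mem_setOf_eq, Set.mem_image, bil_adj]
  constructor
  · rintro ⟨⟨hxz, hxr⟩, ⟨hyz, hyr⟩⟩
    refine ⟨x - z, ⟨hxr, ?_⟩, by abel⟩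
    have h2 : (x - y) - (x - z) = -(y - z) := by abel
    rw [h2, rank_neg]
    exact hyr
  · rintro ⟨C, ⟨hC, hDC⟩, rfl⟩
    refine ⟨⟨?_, ?_⟩, ?_, ?_⟩
    · intro h
      have h0 : C = 0 := sub_eq_self.mp h.symm
      rw [h0, Matrix.rank_zero] at hC
      exact one_ne_zero hC.symm
    · rw [sub_sub_cancel]
      exact hC
    · intro h
      have h0 : (x - y) - C = 0 := by rw [h]; abel
      rw [h0, Matrix.rank_zero] at hDC
      exact one_ne_zero hDC.symm
    · have h2 : y - (x - C) = -((x - y) - C) := by abel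
      rw [h2, rank_neg]
      exact hDC

end BilHelp

/-- For a finite field `F` with `q` elements and `e ≥ 2`, the bilinear
forms graph `Bil_q(e × 2)` is strongly regular with parameters
`(q^(2e), (q^e - 1)(q + 1), q^e - 2 + q(q - 1), q(q + 1))`. -/
theorem bil_e_by_2_strongly_regular (F : Type) [Field F] [Fintype F] (q : ℕ)
    (hq : Fintype.card F = q) (e : ℕ) (he : 2 ≤ e) :
    Fintype.card (Matrix (Fin e) (Fin 2) F) = q ^ (2 * e) ∧
      (∀ x : Matrix (Fin e) (Fin 2) F,
        {y | (bilGraph F e 2).Adj x y}.ncard = (q ^ e - 1) * (q + 1)) ∧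
      (∀ x y : Matrix (Fin e) (Fin 2) F, (bilGraph F e 2).Adj x y →
        {z | (bilGraph F e 2).Adj x z ∧ (bilGraph F e 2).Adj y z}.ncard =
          q ^ e - 2 + q * (q - 1)) ∧
      (∀ x y : Matrix (Fin e) (Fin 2) F, x ≠ y → ¬ (bilGraph F e 2).Adj x y →
        {z | (bilGraph F e 2).Adj x z ∧ (bilGraph F e 2).Adj y z}.ncard = q * (q + 1)) := by
  classical
  have hq2 : 2 ≤ q := by
    rw [← hq]
    exact Fintype.one_lt_card
  have hcardm : Fintype.card (Matrix (Fin e) (Fin 2) F) = q ^ (2 * e) := by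
    have h0 : Fintype.card (Matrix (Fin e) (Fin 2) F) = Fintype.card (Fin e → Fin 2 → F) := rfl
    rw [h0, Fintype.card_fun, Fintype.card_fun, Fintype.card_fin, Fintype.card_fin, hq,
      ← pow_mul, mul_comm]
  refine ⟨hcardm, ?_, ?_, ?_⟩
  · intro x
    rw [BilHelp.neighbor_eq x, Set.ncard_image_of_injective _ sub_right_injective,
      BilHelp.card_rank_one, hq]
  · intro x y hxy
    rw [BilHelp.bil_adj] at hxy
    obtain ⟨hne, hr⟩ := hxy
    obtain ⟨u, v, hu, hv, hrep⟩ := (BilHelp.rank_one_iff _).mp hr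
    rw [BilHelp.common_eq x y, Set.ncard_image_of_injective _ sub_right_injective, hrep,
      BilHelp.card_lambda hu hv, hq]
    obtain ⟨r, rfl⟩ : ∃ r, q = r + 2 := ⟨q - 2, by omega⟩
    have hpe : (r + 2) ^ 2 ≤ (r + 2) ^ e := Nat.pow_le_pow_right (by omega) he
    have h3 : r + 2 - 1 = r + 1 := by omega
    rw [h3]
    have h2 : (r + 2) ^ 2 = r * r + 4 * r + 4 := by ring
    have h4 : (r + 2) * (r + 1) = r * r + 3 * r + 2 := by ring
    rw [h2, h4]
    rw [h2] at hpe
    generalize (r + 2) ^ e = A at hpe ⊢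
    generalize r * r = B at hpe ⊢
    omega
  · intro x y hne hnadj
    have hr : (x - y).rank ≠ 1 := by
      intro h
      exact hnadj ((BilHelp.bil_adj x y).mpr ⟨hne, h⟩)
    have hD : ∀ s t : F, (∀ i, s * (x - y) i 0 + t * (x - y) i 1 = 0) → s = 0 ∧ t = 0 := by
      intro s t hrel
      by_contra hc
      apply hr
      apply (BilHelp.rank_one_iff _).mpr
      obtain ⟨u, v, hu, hv, hrep⟩ :=
        BilHelp.rep_of_dep (sub_ne_zero.mpr hne) hc hrel
      exact ⟨u, v, hu, hv, hrep⟩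
    rw [BilHelp.common_eq x y, Set.ncard_image_of_injective _ sub_right_injective,
      BilHelp.card_mu hD, BilHelp.card_T, hq]
end

section
/- There exists no finite simple graph whose real adjacency matrix has characteristic polynomial (X − 10)·(X − 3)^{13}·(X + 1)^{7}·(X + 3)^{14} (equivalently, no graph on 35 vertices with spectrum [10]^1, [3]^{13}, [−1]^{7}, [−3]^{14}). -/
open SimpleGraph Polynomial
open scoped Classical

open scoped Classical in
/-- The (real) adjacency matrix of a finite simple graph. -/
noncomputable def adjMat {W : Type} [Fintype W] (G : SimpleGraph W) : Matrix W W ℝ :=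
  Matrix.of fun a b => if G.Adj a b then 1 else 0

/-- `η` is a non-principal eigenvalue of the finite graph `G`: a real eigenvalue of the
adjacency matrix admitting an eigenvector orthogonal to the all-ones vector. -/
def IsNonprincipalEigenvalue {W : Type} [Fintype W] (G : SimpleGraph W) (η : ℝ) : Prop :=
  ∃ v : W → ℝ, v ≠ 0 ∧ (adjMat G).mulVec v = η • v ∧ ∑ w : W, v w = 0

namespace Aux15

open Matrix

variable {n : Type*} [Fintype n] [DecidableEq n]

theorem charpoly_conj (U D W : Matrix n n ℝ) (h1 : U * W = 1) :
    (U * D * W).charpoly = D.charpoly := by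
  unfold Matrix.charpoly
  have key : charmatrix (U * D * W) = (U.map C) * charmatrix D * (W.map C) := by
    unfold charmatrix
    rw [Matrix.mul_sub, Matrix.sub_mul]
    congr 1
    · rw [mul_assoc, (Matrix.scalar_commute X (Commute.all X) (W.map C)).eq,
        ← mul_assoc, ← Matrix.map_mul, h1]
      simp
    · simp [Matrix.map_mul, RingHom.mapMatrix_apply]
  rw [key, det_mul, det_mul, mul_comm, ← mul_assoc, mul_comm (W.map C).det, ← det_mul,
    ← Matrix.map_mul, h1]
  simp

theorem charpoly_diag (d : n → ℝ) : (Matrix.diagonal d).charpoly = ∏ i, (X - C (d i)) := by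
  unfold Matrix.charpoly
  have : charmatrix (diagonal d) = diagonal (fun i => X - C (d i)) := by
    ext i j
    by_cases h : i = j
    · subst h; simp
    · rw [charmatrix_apply_ne _ _ _ h, diagonal_apply_ne _ h, diagonal_apply_ne _ h]
      simp
  rw [this, det_diagonal]

variable {A : Matrix n n ℝ} (hA : A.IsHermitian)

theorem charpoly_eq : A.charpoly = ∏ i, (X - C (hA.eigenvalues i)) := by
  have hr : (RCLike.ofReal ∘ hA.eigenvalues : n → ℝ) = hA.eigenvalues := by funext i; simp
  have h1 : (hA.eigenvectorUnitary : Matrix n n ℝ) *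
      star (hA.eigenvectorUnitary : Matrix n n ℝ) = 1 :=
    (Matrix.mem_unitaryGroup_iff).mp hA.eigenvectorUnitary.2
  conv_lhs => rw [hA.spectral_theorem, Unitary.conjStarAlgAut_apply]
  rw [charpoly_conj _ _ _ h1, hr, charpoly_diag]

theorem trace_sq : (A * A).trace = ∑ i, hA.eigenvalues i ^ 2 := by
  set U := (hA.eigenvectorUnitary : Matrix n n ℝ) with hU
  set V := (star (hA.eigenvectorUnitary : Matrix n n ℝ) : Matrix n n ℝ) with hV
  have h2 : V * U = 1 := Unitary.coe_star_mul_self hA.eigenvectorUnitary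
  have hr : (RCLike.ofReal ∘ hA.eigenvalues : n → ℝ) = hA.eigenvalues := by funext i; simp
  set D := diagonal hA.eigenvalues with hD
  have hsp : A = U * D * V := by
    rw [hD, ← hr]; exact hA.spectral_theorem.trans (Unitary.conjStarAlgAut_apply _ _)
  have e : (U * D * V) * (U * D * V) = U * (D * D) * V := by
    rw [show U * D * V * (U * D * V) = U * D * (V * U) * (D * V) by noncomm_ring, h2, mul_one]
    noncomm_ring
  conv_lhs => rw [hsp, e]
  rw [Matrix.trace_mul_comm, ← Matrix.mul_assoc, h2, Matrix.one_mul, hD,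
    diagonal_mul_diagonal, trace_diagonal]
  exact Finset.sum_congr rfl fun i _ => (sq _).symm

theorem ortho_dot (i j : n) :
    (hA.eigenvectorBasis i : n → ℝ) ⬝ᵥ (hA.eigenvectorBasis j : n → ℝ)
      = if i = j then 1 else 0 := by
  have h := (orthonormal_iff_ite.mp hA.eigenvectorBasis.orthonormal) i j
  rw [← h]
  simp [PiLp.inner_apply, RCLike.inner_apply, dotProduct, mul_comm]

theorem expansion (x : n → ℝ) :
    x = ∑ i, ((hA.eigenvectorBasis i : n → ℝ) ⬝ᵥ x) • (hA.eigenvectorBasis i : n → ℝ) := by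
  funext v
  rw [Finset.sum_apply]
  have h := hA.eigenvectorBasis.sum_repr (WithLp.toLp 2 x : EuclideanSpace ℝ n)
  have h3 : ((∑ j, hA.eigenvectorBasis.repr (WithLp.toLp 2 x) j • hA.eigenvectorBasis j :
        EuclideanSpace ℝ n) : n → ℝ) v
      = ∑ j, hA.eigenvectorBasis.repr (WithLp.toLp 2 x) j * (hA.eigenvectorBasis j v) :=
    by simp [WithLp.ofLp_sum, WithLp.ofLp_smul]
  have h4 : x v = ∑ j, hA.eigenvectorBasis.repr (WithLp.toLp 2 x) j * (hA.eigenvectorBasis j v) := by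
    conv_lhs => rw [show x v = (WithLp.toLp 2 x : EuclideanSpace ℝ n) v from rfl, ← h]
    exact h3
  rw [h4]
  refine Finset.sum_congr rfl fun i _ => ?_
  simp only [Pi.smul_apply, smul_eq_mul]
  congr 1
  rw [hA.eigenvectorBasis.repr_apply_apply]
  simp [PiLp.inner_apply, RCLike.inner_apply, dotProduct, mul_comm]

theorem roots_p : ((X - C 10) * (X - C 3) ^ 13 * (X + C 1) ^ 7 * (X + C 3) ^ 14 : ℝ[X]).roots
    = {10} + Multiset.replicate 13 3 + Multiset.replicate 7 (-1)
    + Multiset.replicate 14 (-3) := by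
  have h1 : (X + C (1:ℝ)) = X - C (-1) := by rw [map_neg, sub_neg_eq_add]
  have h3 : (X + C (3:ℝ)) = X - C (-3) := by rw [map_neg, sub_neg_eq_add]
  rw [h1, h3]
  have m1 : ((X - C (10:ℝ)) * (X - C 3) ^ 13).Monic :=
    (monic_X_sub_C _).mul ((monic_X_sub_C _).pow 13)
  have m2 : ((X - C (10:ℝ)) * (X - C 3) ^ 13 * (X - C (-1)) ^ 7).Monic :=
    m1.mul ((monic_X_sub_C _).pow 7)
  rw [roots_mul (m2.mul ((monic_X_sub_C (-3:ℝ)).pow 14)).ne_zero,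
    roots_mul m2.ne_zero, roots_mul m1.ne_zero, roots_pow, roots_pow, roots_pow, roots_X_sub_C,
    roots_X_sub_C, roots_X_sub_C, roots_X_sub_C]
  simp [Multiset.nsmul_singleton]

theorem roots_prod {V : Type} [Fintype V] (μ : V → ℝ) :
    (∏ i, (X - C (μ i))).roots = Finset.univ.val.map μ := by
  rw [show (∏ i, (X - C (μ i))) = ((Finset.univ.val.map μ).map (fun a => X - C a)).prod from by
    rw [Multiset.map_map]; rfl, roots_multiset_prod_X_sub_C]

end Aux15

/-- No finite simple graph has adjacency matrix with characteristic
polynomial `(X - 10)(X - 3)^13 (X + 1)^7 (X + 3)^14`, i.e. no graph has spectrum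
`[10]^1, [3]^13, [-1]^7, [-3]^14`. -/
theorem no_graph_with_spectrum_10_3_m1_m3 (V : Type) [Fintype V] (G : SimpleGraph V) :
    (adjMat G).charpoly ≠
      (X - C 10) * (X - C 3) ^ 13 * (X + C 1) ^ 7 * (X + C 3) ^ 14 := by
  intro h
  classical
  set A := adjMat G with hAdef
  open Matrix in
  -- A is symmetric
  have hT : Aᵀ = A := by
    ext i j
    simp only [hAdef, adjMat, Matrix.transpose_apply, Matrix.of_apply]
    rw [G.adj_comm]
  have hA : A.IsHermitian := by
    show Aᴴ = A
    rw [Matrix.conjTranspose_eq_transpose_of_trivial]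
    exact hT
  set μ : V → ℝ := hA.eigenvalues with hμdef
  set u : V → V → ℝ := fun i => (hA.eigenvectorBasis i : V → ℝ) with hudef
  have heig : ∀ i, A *ᵥ u i = μ i • u i := fun i => hA.mulVec_eigenvectorBasis i
  have hu : ∀ i j, u i ⬝ᵥ u j = if i = j then 1 else 0 := fun i j => Aux15.ortho_dot hA i j
  have hexp : ∀ x : V → ℝ, x = ∑ i, (u i ⬝ᵥ x) • u i := fun x => Aux15.expansion hA x
  -- eigenvalue multiset
  have hM : Finset.univ.val.map μ = ({10} : Multiset ℝ) + Multiset.replicate 13 3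
      + Multiset.replicate 7 (-1) + Multiset.replicate 14 (-3) := by
    rw [← Aux15.roots_prod μ, ← Aux15.roots_p, ← h, Aux15.charpoly_eq hA]
  have hcard : Fintype.card V = 35 := by
    have := congrArg Multiset.card hM
    simpa using this
  have hvals : ∀ i, μ i = 10 ∨ μ i = 3 ∨ μ i = -1 ∨ μ i = -3 := by
    intro i
    have hm : μ i ∈ Finset.univ.val.map μ := Multiset.mem_map_of_mem μ (Finset.mem_univ_val i)
    rw [hM] at hm
    simp [Multiset.mem_replicate] at hm
    tauto
  have hsum2 : ∑ i, μ i ^ 2 = 350 := by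
    have h2 : ∑ i, μ i ^ 2 = ((Finset.univ.val.map μ).map (fun x => x ^ 2)).sum := by
      rw [Multiset.map_map]; rfl
    rw [h2, hM]
    simp [Multiset.sum_replicate]
    norm_num
  obtain ⟨i0, hμ0, hi0uniq⟩ : ∃ i0 : V, μ i0 = 10 ∧ ∀ i, μ i = 10 → i = i0 := by
    have hc : Multiset.count 10 (Finset.univ.val.map μ) = 1 := by
      rw [hM, Multiset.count_add, Multiset.count_add, Multiset.count_add,
        Multiset.count_singleton, Multiset.count_replicate, Multiset.count_replicate,
        Multiset.count_replicate]
      norm_num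
    rw [Multiset.count_map] at hc
    have hc' : (Finset.univ.filter (fun i => 10 = μ i)).card = 1 := hc
    obtain ⟨j0, hj0⟩ := Finset.card_eq_one.mp hc'
    refine ⟨j0, ?_, ?_⟩
    · have : j0 ∈ Finset.univ.filter (fun i => 10 = μ i) := hj0 ▸ Finset.mem_singleton_self j0
      exact ((Finset.mem_filter.mp this).2).symm
    · intro i hi
      have : i ∈ Finset.univ.filter (fun i => 10 = μ i) :=
        Finset.mem_filter.mpr ⟨Finset.mem_univ _, hi.symm⟩
      rw [hj0] at this
      exact Finset.mem_singleton.mp this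
  -- sum of all entries of A is 350
  have hApp : ∀ x y, A x y * A y x = A x y := by
    intro x y
    have h2 : A y x = A x y := congrFun (congrFun hT x) y
    have hent : A x y = if G.Adj x y then (1:ℝ) else 0 := rfl
    rw [h2, hent]
    split <;> norm_num
  have hAsum : ∑ x, ∑ y, A x y = 350 := by
    have htr : (A * A).trace = ∑ i, μ i ^ 2 := Aux15.trace_sq hA
    rw [hsum2] at htr
    rw [← htr]
    rw [Matrix.trace]
    refine Finset.sum_congr rfl fun x _ => ?_
    rw [Matrix.diag_apply, Matrix.mul_apply]
    exact (Finset.sum_congr rfl fun y _ => hApp x y).symm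
  -- all-ones vector
  set e : V → ℝ := fun _ => 1 with hedef
  have hdotsum : ∀ (w : V → ℝ) (f : V → V → ℝ), w ⬝ᵥ (∑ i, f i) = ∑ i, w ⬝ᵥ f i := by
    intro w f
    simp only [dotProduct, Finset.sum_apply, Finset.mul_sum]
    exact Finset.sum_comm
  set c : V → ℝ := fun i => u i ⬝ᵥ e with hcdef
  have hsymdot : ∀ v w : V → ℝ, v ⬝ᵥ (A *ᵥ w) = (A *ᵥ v) ⬝ᵥ w := by
    intro v w
    rw [Matrix.dotProduct_mulVec, ← Matrix.mulVec_transpose, hT]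
  have hee : e ⬝ᵥ e = 35 := by
    simp [hedef, dotProduct, hcard]
  have hdc : ∀ i, e ⬝ᵥ u i = c i := fun i => dotProduct_comm e (u i)
  have hc2 : ∑ i, c i ^ 2 = 35 := by
    have h2 : e ⬝ᵥ e = ∑ i, c i ^ 2 := by
      conv_lhs => rw [show e ⬝ᵥ e = e ⬝ᵥ (∑ i, c i • u i) from by rw [← hexp e]]
      rw [hdotsum]
      refine Finset.sum_congr rfl fun i _ => ?_
      rw [dotProduct_smul, hdc i, smul_eq_mul, sq]
    rw [← h2, hee]
  have hmuc : ∑ i, μ i * c i ^ 2 = 350 := by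
    have hAone : e ⬝ᵥ (A *ᵥ e) = ∑ x, ∑ y, A x y := by
      simp [hedef, dotProduct, Matrix.mulVec]
    have h2 : e ⬝ᵥ (A *ᵥ e) = ∑ i, μ i * c i ^ 2 := by
      conv_lhs => rw [show A *ᵥ e = A *ᵥ (∑ i, c i • u i) from by rw [← hexp e]]
      rw [show A *ᵥ (∑ i, c i • u i) = ∑ i, c i • (A *ᵥ u i) from by
        simp only [← Matrix.mulVecLin_apply, map_sum, _root_.map_smul]]
      rw [hdotsum]
      refine Finset.sum_congr rfl fun i _ => ?_
      rw [heig i, dotProduct_smul, dotProduct_smul, hdc i]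
      simp only [smul_eq_mul]
      ring
    rw [← h2, hAone, hAsum]
  -- Rayleigh equality: c i = 0 unless μ i = 10
  have hczero : ∀ i, μ i ≠ 10 → c i = 0 := by
    have hkey : ∑ i, (10 - μ i) * c i ^ 2 = 0 := by
      simp only [sub_mul]
      rw [Finset.sum_sub_distrib, ← Finset.mul_sum, hc2, hmuc]
      norm_num
    have hnn : ∀ i ∈ Finset.univ, 0 ≤ (10 - μ i) * c i ^ 2 := by
      intro i _
      have : (0:ℝ) ≤ 10 - μ i := by rcases hvals i with h'|h'|h'|h' <;> rw [h'] <;> norm_num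
      positivity
    have hz := (Finset.sum_eq_zero_iff_of_nonneg hnn).mp hkey
    intro i hi
    have h3 := hz i (Finset.mem_univ i)
    have h4 : (0:ℝ) < 10 - μ i := by
      rcases hvals i with h'|h'|h'|h'
      · exact absurd h' hi
      all_goals rw [h']; norm_num
    have h5 : c i ^ 2 = 0 := by
      rcases mul_eq_zero.mp h3 with h6 | h6
      · linarith
      · exact h6
    exact (pow_eq_zero_iff two_ne_zero).mp h5
  -- the all-ones vector is (up to scalar) the eigenvector for 10
  have h1' : e = c i0 • u i0 := by
    conv_lhs => rw [hexp e]
    rw [Finset.sum_eq_single i0 (fun i _ hne => by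
        rw [show u i ⬝ᵥ e = (0:ℝ) from hczero i (fun hh => hne (hi0uniq i hh)), zero_smul])
      (fun hh => absurd (Finset.mem_univ i0) hh)]
  have hx0 : ∃ x0 : V, True := by
    have : Nonempty V := Fintype.card_pos_iff.mp (by rw [hcard]; norm_num)
    exact ⟨Classical.arbitrary V, trivial⟩
  obtain ⟨x0, -⟩ := hx0
  have hc0 : c i0 ≠ 0 := by
    intro hzero
    have := congrFun h1' x0
    rw [hzero, zero_smul] at this
    simp [hedef] at this
  have hu0 : ∀ x, u i0 x = 1 / c i0 := by
    intro x
    have hh := congrFun h1' x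
    simp only [hedef, Pi.smul_apply, smul_eq_mul] at hh
    field_simp
    linarith [hh]
  -- the matrix N = A^3 + A^2 - 9A - 9
  set N : Matrix V V ℝ := A * A * A + A * A - (9:ℝ) • A - (9:ℝ) • (1 : Matrix V V ℝ) with hNdef
  have hNu : ∀ i, N *ᵥ u i = (μ i ^ 3 + μ i ^ 2 - 9 * μ i - 9) • u i := by
    intro i
    have h3 : (A * A * A) *ᵥ u i = (μ i ^ 3) • u i := by
      simp only [← Matrix.mulVec_mulVec, heig i, Matrix.mulVec_smul]
      funext v
      simp only [Pi.smul_apply, smul_eq_mul]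
      ring
    have h2 : (A * A) *ᵥ u i = (μ i ^ 2) • u i := by
      simp only [← Matrix.mulVec_mulVec, heig i, Matrix.mulVec_smul]
      funext v
      simp only [Pi.smul_apply, smul_eq_mul]
      ring
    rw [hNdef, Matrix.sub_mulVec, Matrix.sub_mulVec, Matrix.add_mulVec,
      Matrix.smul_mulVec, Matrix.smul_mulVec, Matrix.one_mulVec, h3, h2, heig i]
    funext v
    simp only [Pi.smul_apply, Pi.sub_apply, Pi.add_apply, smul_eq_mul]
    ring
  have hNw : ∀ w : V → ℝ, N *ᵥ w = ((u i0 ⬝ᵥ w) * 1001) • u i0 := by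
    intro w
    conv_lhs => rw [show w = ∑ i, (u i ⬝ᵥ w) • u i from hexp w]
    rw [show N *ᵥ (∑ i, (u i ⬝ᵥ w) • u i) = ∑ i, (u i ⬝ᵥ w) • (N *ᵥ u i) from by
      simp only [← Matrix.mulVecLin_apply, map_sum, _root_.map_smul]]
    rw [Finset.sum_eq_single i0]
    · rw [hNu i0, hμ0, smul_smul]
      norm_num
    · intro i _ hne
      have hne10 : μ i ≠ 10 := fun hh => hne (hi0uniq i hh)
      have hzero : μ i ^ 3 + μ i ^ 2 - 9 * μ i - 9 = 0 := by
        rcases hvals i with h'|h'|h'|h'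
        · exact absurd h' hne10
        all_goals rw [h']; norm_num
      rw [hNu i, hzero, zero_smul, smul_zero]
    · intro hh
      exact absurd (Finset.mem_univ i0) hh
  -- all entries of N are equal
  have hcol : ∀ x j, N x j = (u i0 ⬝ᵥ Pi.single j 1) * 1001 * (1 / c i0) := by
    intro x j
    have hh := congrFun (hNw (Pi.single j 1)) x
    rw [Matrix.mulVec_single_one] at hh
    simp only [mul_one, Pi.smul_apply, smul_eq_mul] at hh
    change N x j = _ at hh
    rw [hh, hu0 x]
  have hNsym : ∀ x y, N x y = N y x := by
    intro x y
    have hTT : Nᵀ = N := by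
      rw [hNdef]
      simp only [Matrix.transpose_sub, Matrix.transpose_add, Matrix.transpose_smul,
        Matrix.transpose_one, Matrix.transpose_mul, hT]
      noncomm_ring
    exact (congrFun (congrFun hTT x) y).symm
  have hconst : ∀ x y, N x y = N x0 x0 := by
    intro x y
    have c1 : N x y = N x0 y := by rw [hcol x y, hcol x0 y]
    have c2 : N x0 y = N y x0 := hNsym x0 y
    have c3 : N y x0 = N x0 x0 := by rw [hcol y x0, hcol x0 x0]
    rw [c1, c2, c3]
  -- row sum is 1001
  have hrow : ∑ y, N x0 y = 1001 := by
    have hh := congrFun (hNw e) x0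
    have hNe : (N *ᵥ e) x0 = ∑ y, N x0 y := by
      simp [Matrix.mulVec, dotProduct, hedef]
    rw [hNe] at hh
    rw [hh]
    simp only [Pi.smul_apply, smul_eq_mul]
    rw [hu0 x0, show u i0 ⬝ᵥ e = c i0 from rfl]
    field_simp
  have h35 : (35 : ℝ) * N x0 x0 = 1001 := by
    rw [← hrow]
    rw [Finset.sum_congr rfl fun y _ => hconst x0 y]
    rw [Finset.sum_const, Finset.card_univ, hcard]
    simp
  -- integrality of N x0 x0
  obtain ⟨k, hk⟩ : ∃ k : ℤ, N x0 x0 = (k : ℝ) := by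
    set B : Matrix V V ℤ := Matrix.of fun a b => if G.Adj a b then 1 else 0 with hBdef
    have hAB : A = B.map (Int.cast : ℤ → ℝ) := by
      ext a b
      show (if G.Adj a b then (1:ℝ) else 0) = _
      rw [Matrix.map_apply]
      show _ = ((if G.Adj a b then (1:ℤ) else 0 : ℤ) : ℝ)
      split <;> norm_num
    have hmap : ∀ M1 M2 : Matrix V V ℤ,
        (M1.map (Int.cast : ℤ → ℝ)) * (M2.map (Int.cast : ℤ → ℝ))
          = (M1 * M2).map (Int.cast : ℤ → ℝ) := by
      intro M1 M2
      ext a b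
      simp [Matrix.mul_apply, Matrix.map_apply]
    refine ⟨(B * B * B) x0 x0 + (B * B) x0 x0 - 9 * B x0 x0 - 9 * (1 : Matrix V V ℤ) x0 x0, ?_⟩
    have e1 : N x0 x0 = (A*A*A) x0 x0 + (A*A) x0 x0 - 9 * A x0 x0
        - 9 * (1 : Matrix V V ℝ) x0 x0 := by
      rw [hNdef]
      simp [Matrix.sub_apply, Matrix.add_apply, Matrix.smul_apply]
    rw [e1, hAB, hmap B B, hmap (B * B) B]
    have hone : (1 : Matrix V V ℝ) x0 x0 = ((1 : Matrix V V ℤ) x0 x0 : ℝ) := by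
      simp [Matrix.one_apply]
    rw [hone]
    simp only [Matrix.map_apply]
    push_cast
    ring
  rw [hk] at h35
  have : (35 * k : ℤ) = 1001 := by exact_mod_cast h35
  omega
end
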